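/- arXiv:1702.06923 — 3 statements merged into one kernel-verified Lean document; each statement's English description precedes it below -/
import Mathlib

section
/- If G₁ and G₂ are finite groups, then the Schur multiplier of their direct product satisfies M(G₁ × G₂) ≅ M(G₁) × M(G₂) × (G₁^ab ⊗ G₂^ab), where G^ab denotes the abelianization and ⊗ the tensor product of abelian groups. -/
/-- The canonical presentation map `FreeGroup G →* G`. -/
def presentation (G : Type*) [Group G] : FreeGroup G →* G := FreeGroup.lift id

/-- The Schur multiplier `M(G) ≅ H₂(G, ℤ)` of a group `G`, defined via Hopf's formula
`M(G) = (R ∩ [F,F]) / [F,R]` for the free presentation `F = FreeGroup G`,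
`R = ker(F →* G)`. -/
def SchurMultiplier (G : Type*) [Group G] : Type _ :=
  ↥((presentation G).ker ⊓ commutator (FreeGroup G)) ⧸
    (⁅(⊤ : Subgroup (FreeGroup G)), (presentation G).ker⁆.subgroupOf
      ((presentation G).ker ⊓ commutator (FreeGroup G)))

noncomputable instance (G : Type*) [Group G] : Group (SchurMultiplier G) :=
  QuotientGroup.Quotient.group _

open scoped commutatorElement

section HopfMachinery

variable {F G : Type*} [Group F] [Group G]

/-- numerator of Hopf formula -/
def hNum (π : F →* G) : Subgroup F := π.ker ⊓ commutator F

/-- denominator -/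
def hDen (π : F →* G) : Subgroup F := ⁅(⊤ : Subgroup F), π.ker⁆

instance (π : F →* G) : (hDen π).Normal := by
  unfold hDen; infer_instance

lemma hDen_le_ker (π : F →* G) : hDen π ≤ π.ker := by
  rw [hDen, Subgroup.commutator_le]
  intro g₁ _ g₂ hg₂
  have h1 : g₁ * g₂ * g₁⁻¹ ∈ π.ker := Subgroup.Normal.conj_mem inferInstance _ hg₂ g₁
  simpa [commutatorElement_def, mul_assoc] using (π.ker).mul_mem h1 ((π.ker).inv_mem hg₂)

lemma hDen_le_hNum (π : F →* G) : hDen π ≤ hNum π :=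
  le_inf (hDen_le_ker π) (Subgroup.commutator_mono le_top le_top)

/-- the Hopf quotient -/
abbrev Hopf (π : F →* G) : Type _ := ↥(hNum π) ⧸ ((hDen π).subgroupOf (hNum π))

/-- class of an element of the numerator -/
def hMk (π : F →* G) (x : F) (hx : x ∈ hNum π) : Hopf π :=
  QuotientGroup.mk (⟨x, hx⟩ : ↥(hNum π))

lemma hMk_mul (π : F →* G) (x y : F) (hx : x ∈ hNum π) (hy : y ∈ hNum π) :
    hMk π (x * y) ((hNum π).mul_mem hx hy) = hMk π x hx * hMk π y hy := rfl

lemma hMk_eq_iff (π : F →* G) (x y : F) (hx : x ∈ hNum π) (hy : y ∈ hNum π) :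
    hMk π x hx = hMk π y hy ↔ x⁻¹ * y ∈ hDen π := by
  rw [hMk, hMk, QuotientGroup.eq, Subgroup.mem_subgroupOf]
  rfl

lemma ker_mk_central (π : F →* G) {f r : F} (hr : r ∈ π.ker) :
    (QuotientGroup.mk (f * r * f⁻¹ * r⁻¹) : F ⧸ hDen π) = 1 := by
  rw [QuotientGroup.eq_one_iff]
  exact Subgroup.commutator_mem_commutator (Subgroup.mem_top f) hr

lemma ker_comm_mod_den (π : F →* G) {r s : F} (hr : r ∈ π.ker) :
    (QuotientGroup.mk (r * s) : F ⧸ hDen π) = QuotientGroup.mk (s * r) := by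
  rw [QuotientGroup.eq]
  have h2 : (r * s)⁻¹ * (s * r) = ⁅s⁻¹, r⁻¹⁆ := by group
  rw [h2]
  exact Subgroup.commutator_mem_commutator (Subgroup.mem_top _) (π.ker.inv_mem hr)

variable {F' G' F'' G'' : Type*} [Group F'] [Group G'] [Group F''] [Group G'']

lemma hNum_map (π : F →* G) (π' : F' →* G') (α : F →* F')
    (hker : ∀ x, π x = 1 → π' (α x) = 1) {x : F} (hx : x ∈ hNum π) :
    α x ∈ hNum π' := by
  refine ⟨hker x hx.1, ?_⟩
  have : (commutator F).map α ≤ commutator F' := by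
    rw [commutator_def, Subgroup.map_commutator]
    exact Subgroup.commutator_mono le_top le_top
  exact this (Subgroup.mem_map_of_mem α hx.2)

lemma hDen_map (π : F →* G) (π' : F' →* G') (α : F →* F')
    (hker : ∀ x, π x = 1 → π' (α x) = 1) {x : F} (hx : x ∈ hDen π) :
    α x ∈ hDen π' := by
  have : (hDen π).map α ≤ hDen π' := by
    rw [hDen, Subgroup.map_commutator]
    refine Subgroup.commutator_mono le_top ?_
    rintro y ⟨z, hz, rfl⟩
    exact hker z hz
  exact this (Subgroup.mem_map_of_mem α hx)

/-- the induced map on Hopf quotients -/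
def hopfMap (π : F →* G) (π' : F' →* G') (α : F →* F')
    (hker : ∀ x, π x = 1 → π' (α x) = 1) : Hopf π →* Hopf π' := by
  refine QuotientGroup.lift _ ((QuotientGroup.mk' _).comp
    (MonoidHom.codRestrict (α.comp (hNum π).subtype) (hNum π')
      (fun x => hNum_map π π' α hker x.2))) ?_
  intro x hx
  rw [Subgroup.mem_subgroupOf] at hx
  rw [MonoidHom.mem_ker, MonoidHom.comp_apply, QuotientGroup.mk'_apply,
    QuotientGroup.eq_one_iff, Subgroup.mem_subgroupOf]
  exact hDen_map π π' α hker hx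

lemma hopfMap_mk (π : F →* G) (π' : F' →* G') (α : F →* F')
    (hker : ∀ x, π x = 1 → π' (α x) = 1) (x : F) (hx : x ∈ hNum π) :
    hopfMap π π' α hker (hMk π x hx) = hMk π' (α x) (hNum_map π π' α hker hx) := rfl

lemma hopfMap_comp (π : F →* G) (π' : F' →* G') (π'' : F'' →* G'')
    (α : F →* F') (β : F' →* F'')
    (h1 : ∀ x, π x = 1 → π' (α x) = 1) (h2 : ∀ x, π' x = 1 → π'' (β x) = 1)
    (q : Hopf π) :
    hopfMap π' π'' β h2 (hopfMap π π' α h1 q) =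
      hopfMap π π'' (β.comp α) (fun x hx => h2 _ (h1 x hx)) q := by
  induction q using QuotientGroup.induction_on
  rfl

/-- An endomorphism compatible with π induces the identity on the Hopf quotient. -/
lemma hopfMap_self (π : F →* G) (α : F →* F)
    (h : ∀ x, π (α x) = π x) (q : Hopf π) :
    hopfMap π π α (fun x hx => by rw [h, hx]) q = q := by
  induction q using QuotientGroup.induction_on with
  | _ x =>
  obtain ⟨x, hx⟩ := x
  show hMk π (α x) _ = hMk π x hx
  -- the auxiliary homomorphism δ f = ⟦α f * f⁻¹⟧
  have hker : ∀ f, α f * f⁻¹ ∈ π.ker := fun f => by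
    simp [MonoidHom.mem_ker, h f]
  let δ : F →* F ⧸ hDen π := MonoidHom.mk' (fun f => QuotientGroup.mk (α f * f⁻¹)) (by
    intro a b
    have : α (a * b) * (a * b)⁻¹ = (α a * a⁻¹) * (a * (α b * b⁻¹) * a⁻¹) := by
      simp [mul_assoc]
    show (QuotientGroup.mk (α (a*b) * (a*b)⁻¹) : F ⧸ hDen π) = _
    rw [this, QuotientGroup.mk_mul]
    congr 1
    calc (QuotientGroup.mk (a * (α b * b⁻¹) * a⁻¹) : F ⧸ hDen π)
        = QuotientGroup.mk (a * (α b * b⁻¹) * a⁻¹ * (α b * b⁻¹)⁻¹) *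
            QuotientGroup.mk (α b * b⁻¹) := by
          rw [← QuotientGroup.mk_mul]; group
      _ = QuotientGroup.mk (α b * b⁻¹) := by
          rw [ker_mk_central π (hker b), one_mul])
  have hδcomm : ∀ x ∈ commutator F, δ x = 1 := by
    intro x hxc
    have : commutator F ≤ δ.ker := by
      rw [commutator_def, Subgroup.commutator_le]
      intro g₁ _ g₂ _
      rw [MonoidHom.mem_ker, map_commutatorElement]
      have hcomm : Commute (δ g₁) (δ g₂) := by
        show Commute (QuotientGroup.mk _) (QuotientGroup.mk _)
        rw [Commute, SemiconjBy, ← QuotientGroup.mk_mul, ← QuotientGroup.mk_mul]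
        exact ker_comm_mod_den π (hker g₁)
      exact commutatorElement_eq_one_iff_commute.mpr hcomm
    exact this hxc
  have key : α x * x⁻¹ ∈ hDen π := by
    have := hδcomm x hx.2
    rwa [show δ x = QuotientGroup.mk (α x * x⁻¹) from rfl, QuotientGroup.eq_one_iff] at this
  apply (hMk_eq_iff π (α x) x _ hx).mpr
  have : (α x)⁻¹ * x = (α x)⁻¹ * (α x * x⁻¹)⁻¹ * (α x) := by group
  rw [this]
  exact Subgroup.Normal.conj_mem' inferInstance _ ((hDen π).inv_mem key) (α x)

/-- Hopf quotients for two free-style presentations of the same group are isomorphic,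
given compatible homs both ways. -/
def hopfCongr (π : F →* G) (π' : F' →* G) (φ : F →* F') (ψ : F' →* F)
    (h1 : ∀ x, π' (φ x) = π x) (h2 : ∀ x, π (ψ x) = π' x) :
    Hopf π ≃* Hopf π' where
  toFun := hopfMap π π' φ (fun x hx => by rw [h1, hx])
  invFun := hopfMap π' π ψ (fun x hx => by rw [h2, hx])
  left_inv := fun q => by
    rw [hopfMap_comp]
    exact hopfMap_self π (ψ.comp φ) (fun x => by simp [h2, h1]) q
  right_inv := fun q => by
    rw [hopfMap_comp]
    exact hopfMap_self π' (φ.comp ψ) (fun x => by simp [h1, h2]) q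
  map_mul' := map_mul _

lemma hopf_mul_comm (π : F →* G) (a b : Hopf π) : a * b = b * a := by
  induction a using QuotientGroup.induction_on with
  | _ x =>
  induction b using QuotientGroup.induction_on with
  | _ y =>
  rw [← QuotientGroup.mk_mul, ← QuotientGroup.mk_mul, QuotientGroup.eq]
  rw [Subgroup.mem_subgroupOf]
  show (((x * y)⁻¹ : ↥(hNum π)) : F) * ((y:F) * (x:F)) ∈ hDen π
  have h2 : (((x * y)⁻¹ : ↥(hNum π)) : F) * ((y:F) * (x:F)) = ⁅(y:F)⁻¹, (x:F)⁻¹⁆ := by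
    push_cast
    group
  rw [h2]
  exact Subgroup.commutator_mem_commutator (Subgroup.mem_top _) (π.ker.inv_mem x.2.1)

end HopfMachinery

section Concrete

variable (G₁ G₂ : Type*) [Group G₁] [Group G₂]

/-- presentation of G₁ × G₂ from the free group on the disjoint union -/
def π' : FreeGroup (G₁ ⊕ G₂) →* G₁ × G₂ :=
  FreeGroup.lift (Sum.elim (fun g => ((g, 1) : G₁ × G₂)) (fun g => ((1, g) : G₁ × G₂)))

def φmap : FreeGroup (G₁ ⊕ G₂) →* FreeGroup (G₁ × G₂) :=
  FreeGroup.lift (Sum.elim (fun g => FreeGroup.of ((g, 1) : G₁ × G₂))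
    (fun g => FreeGroup.of ((1, g) : G₁ × G₂)))

def ψmap : FreeGroup (G₁ × G₂) →* FreeGroup (G₁ ⊕ G₂) :=
  FreeGroup.lift (fun p => FreeGroup.of (Sum.inl p.1) * FreeGroup.of (Sum.inr p.2))

lemma φ_compat : ∀ x, presentation (G₁ × G₂) (φmap G₁ G₂ x) = π' G₁ G₂ x := by
  have : (presentation (G₁ × G₂)).comp (φmap G₁ G₂) = π' G₁ G₂ := by
    apply FreeGroup.ext_hom
    rintro (g | g) <;> simp [presentation, φmap, π']
  exact fun x => DFunLike.congr_fun this x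

lemma ψ_compat : ∀ x, π' G₁ G₂ (ψmap G₁ G₂ x) = presentation (G₁ × G₂) x := by
  have : (π' G₁ G₂).comp (ψmap G₁ G₂) = presentation (G₁ × G₂) := by
    apply FreeGroup.ext_hom
    rintro ⟨g₁, g₂⟩
    simp [presentation, ψmap, π', Prod.ext_iff]
  exact fun x => DFunLike.congr_fun this x

/-- first invariance step -/
noncomputable def invEquiv : Hopf (presentation (G₁ × G₂)) ≃* Hopf (π' G₁ G₂) :=
  hopfCongr _ _ (ψmap G₁ G₂) (φmap G₁ G₂) (ψ_compat G₁ G₂) (φ_compat G₁ G₂)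

-- the injections and projections
def Imap₁ : FreeGroup G₁ →* FreeGroup (G₁ ⊕ G₂) := FreeGroup.map Sum.inl
def Imap₂ : FreeGroup G₂ →* FreeGroup (G₁ ⊕ G₂) := FreeGroup.map Sum.inr
def Pmap₁ : FreeGroup (G₁ ⊕ G₂) →* FreeGroup G₁ :=
  FreeGroup.lift (Sum.elim FreeGroup.of (fun _ => 1))
def Pmap₂ : FreeGroup (G₁ ⊕ G₂) →* FreeGroup G₂ :=
  FreeGroup.lift (Sum.elim (fun _ => 1) FreeGroup.of)

lemma I₁_compat : ∀ x, π' G₁ G₂ (Imap₁ G₁ G₂ x) = ((presentation G₁ x, 1) : G₁ × G₂) := by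
  have : (π' G₁ G₂).comp (Imap₁ G₁ G₂) =
      ((MonoidHom.inl G₁ G₂).comp (presentation G₁)) := by
    apply FreeGroup.ext_hom
    intro g
    simp [Imap₁, π', presentation]
  exact fun x => DFunLike.congr_fun this x

lemma I₂_compat : ∀ x, π' G₁ G₂ (Imap₂ G₁ G₂ x) = ((1, presentation G₂ x) : G₁ × G₂) := by
  have : (π' G₁ G₂).comp (Imap₂ G₁ G₂) =
      ((MonoidHom.inr G₁ G₂).comp (presentation G₂)) := by
    apply FreeGroup.ext_hom
    intro g
    simp [Imap₂, π', presentation]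
  exact fun x => DFunLike.congr_fun this x

lemma P₁_compat : ∀ x, presentation G₁ (Pmap₁ G₁ G₂ x) = (π' G₁ G₂ x).1 := by
  have : (presentation G₁).comp (Pmap₁ G₁ G₂) =
      (MonoidHom.fst G₁ G₂).comp (π' G₁ G₂) := by
    apply FreeGroup.ext_hom
    rintro (g | g) <;> simp [Pmap₁, π', presentation]
  exact fun x => DFunLike.congr_fun this x

lemma P₂_compat : ∀ x, presentation G₂ (Pmap₂ G₁ G₂ x) = (π' G₁ G₂ x).2 := by
  have : (presentation G₂).comp (Pmap₂ G₁ G₂) =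
      (MonoidHom.snd G₁ G₂).comp (π' G₁ G₂) := by
    apply FreeGroup.ext_hom
    rintro (g | g) <;> simp [Pmap₂, π', presentation]
  exact fun x => DFunLike.congr_fun this x

noncomputable def ΨH₁ : Hopf (presentation G₁) →* Hopf (π' G₁ G₂) :=
  hopfMap _ _ (Imap₁ G₁ G₂) (fun x hx => by rw [I₁_compat, hx]; rfl)

noncomputable def ΨH₂ : Hopf (presentation G₂) →* Hopf (π' G₁ G₂) :=
  hopfMap _ _ (Imap₂ G₁ G₂) (fun x hx => by rw [I₂_compat, hx]; rfl)

noncomputable def ΦH₁ : Hopf (π' G₁ G₂) →* Hopf (presentation G₁) :=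
  hopfMap _ _ (Pmap₁ G₁ G₂) (fun x hx => by rw [P₁_compat, hx]; rfl)

noncomputable def ΦH₂ : Hopf (π' G₁ G₂) →* Hopf (presentation G₂) :=
  hopfMap _ _ (Pmap₂ G₁ G₂) (fun x hx => by rw [P₂_compat, hx]; rfl)

end Concrete

section Tensor

variable (G₁ G₂ : Type*) [Group G₁] [Group G₂]

abbrev TT := TensorProduct ℤ (Additive (Abelianization G₁)) (Additive (Abelianization G₂))

/-- central extension of `Abelianization G₁ × Abelianization G₂` by the tensor product,
with cocycle `a ⊗ b'`. -/
structure WGrp where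
  a : Abelianization G₁
  b : Abelianization G₂
  t : TT G₁ G₂

namespace WGrp

variable {G₁ G₂}

lemma extt (x y : WGrp G₁ G₂) (h1 : x.a = y.a) (h2 : x.b = y.b) (h3 : x.t = y.t) :
    x = y := by
  cases x; cases y; simp_all

noncomputable instance : Mul (WGrp G₁ G₂) :=
  ⟨fun x y => ⟨x.a * y.a, x.b * y.b,
    x.t + y.t + (Additive.ofMul x.a) ⊗ₜ[ℤ] (Additive.ofMul y.b)⟩⟩

noncomputable instance : One (WGrp G₁ G₂) := ⟨⟨1, 1, 0⟩⟩

noncomputable instance : Inv (WGrp G₁ G₂) :=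
  ⟨fun x => ⟨x.a⁻¹, x.b⁻¹, -x.t + (Additive.ofMul x.a) ⊗ₜ[ℤ] (Additive.ofMul x.b)⟩⟩

lemma mul_def (x y : WGrp G₁ G₂) : x * y = ⟨x.a * y.a, x.b * y.b,
    x.t + y.t + (Additive.ofMul x.a) ⊗ₜ[ℤ] (Additive.ofMul y.b)⟩ := rfl

lemma one_def : (1 : WGrp G₁ G₂) = ⟨1, 1, 0⟩ := rfl

noncomputable instance : Group (WGrp G₁ G₂) :=
  Group.ofLeftAxioms
    (fun x y z => by
      refine extt _ _ (mul_assoc _ _ _) (mul_assoc _ _ _) ?_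
      show (x.t + y.t + Additive.ofMul x.a ⊗ₜ[ℤ] Additive.ofMul y.b) + z.t +
          (Additive.ofMul (x.a * y.a)) ⊗ₜ[ℤ] Additive.ofMul z.b =
        x.t + (y.t + z.t + Additive.ofMul y.a ⊗ₜ[ℤ] Additive.ofMul z.b) +
          (Additive.ofMul x.a) ⊗ₜ[ℤ] (Additive.ofMul (y.b * z.b))
      rw [ofMul_mul, ofMul_mul, TensorProduct.add_tmul, TensorProduct.tmul_add]
      abel)
    (fun x => by
      refine extt _ _ (one_mul _) (one_mul _) ?_
      show 0 + x.t + (Additive.ofMul (1 : Abelianization G₁)) ⊗ₜ[ℤ] Additive.ofMul x.b = x.t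
      rw [ofMul_one, TensorProduct.zero_tmul]
      abel)
    (fun x => by
      refine extt _ _ (inv_mul_cancel _) (inv_mul_cancel _) ?_
      show (-x.t + Additive.ofMul x.a ⊗ₜ[ℤ] Additive.ofMul x.b) + x.t +
          (Additive.ofMul x.a⁻¹) ⊗ₜ[ℤ] Additive.ofMul x.b = 0
      rw [ofMul_inv, TensorProduct.neg_tmul]
      abel)

end WGrp

/-- the auxiliary homomorphism from the free group to `WGrp`. -/
noncomputable def wHom : FreeGroup (G₁ ⊕ G₂) →* WGrp G₁ G₂ :=
  FreeGroup.lift (Sum.elim (fun g => ⟨Abelianization.of g, 1, 0⟩)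
    (fun g => ⟨1, Abelianization.of g, 0⟩))

lemma wHom_a : ∀ x, (wHom G₁ G₂ x).a = Abelianization.of (π' G₁ G₂ x).1 := by
  have : (MonoidHom.mk' (fun x : WGrp G₁ G₂ => x.a) (fun _ _ => rfl)).comp (wHom G₁ G₂) =
      (Abelianization.of.comp (MonoidHom.fst G₁ G₂)).comp (π' G₁ G₂) := by
    apply FreeGroup.ext_hom
    rintro (g | g) <;> simp [wHom, π']
  exact fun x => DFunLike.congr_fun this x

lemma wHom_b : ∀ x, (wHom G₁ G₂ x).b = Abelianization.of (π' G₁ G₂ x).2 := by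
  have : (MonoidHom.mk' (fun x : WGrp G₁ G₂ => x.b) (fun _ _ => rfl)).comp (wHom G₁ G₂) =
      (Abelianization.of.comp (MonoidHom.snd G₁ G₂)).comp (π' G₁ G₂) := by
    apply FreeGroup.ext_hom
    rintro (g | g) <;> simp [wHom, π']
  exact fun x => DFunLike.congr_fun this x

lemma wHom_central (G₁ G₂ : Type*) [Group G₁] [Group G₂] {r : FreeGroup (G₁ ⊕ G₂)}
    (hr : r ∈ (π' G₁ G₂).ker) (x : WGrp G₁ G₂) :
    Commute x (wHom G₁ G₂ r) := by
  have hr1 : π' G₁ G₂ r = 1 := MonoidHom.mem_ker.mp hr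
  have ha : (wHom G₁ G₂ r).a = 1 := by
    rw [wHom_a, hr1]; exact map_one _
  have hb : (wHom G₁ G₂ r).b = 1 := by
    rw [wHom_b, hr1]; exact map_one _
  rw [Commute, SemiconjBy]
  refine WGrp.extt _ _ ?_ ?_ ?_
  · show x.a * (wHom G₁ G₂ r).a = (wHom G₁ G₂ r).a * x.a
    rw [ha, mul_one, one_mul]
  · show x.b * (wHom G₁ G₂ r).b = (wHom G₁ G₂ r).b * x.b
    rw [hb, mul_one, one_mul]
  · show x.t + (wHom G₁ G₂ r).t + Additive.ofMul x.a ⊗ₜ[ℤ] Additive.ofMul (wHom G₁ G₂ r).b =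
      (wHom G₁ G₂ r).t + x.t + Additive.ofMul (wHom G₁ G₂ r).a ⊗ₜ[ℤ] Additive.ofMul x.b
    rw [ha, hb]
    simp only [ofMul_one, TensorProduct.tmul_zero, TensorProduct.zero_tmul]
    abel

end Tensor

section Tau

variable (G₁ G₂ : Type*) [Group G₁] [Group G₂]

lemma WGrp.inv_def (x : WGrp G₁ G₂) :
    x⁻¹ = ⟨x.a⁻¹, x.b⁻¹, -x.t + (Additive.ofMul x.a) ⊗ₜ[ℤ] (Additive.ofMul x.b)⟩ := rfl

lemma wHom_den (x : FreeGroup (G₁ ⊕ G₂)) (hx : x ∈ hDen (π' G₁ G₂)) :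
    wHom G₁ G₂ x = 1 := by
  have : hDen (π' G₁ G₂) ≤ (wHom G₁ G₂).ker := by
    rw [hDen, Subgroup.commutator_le]
    intro f _ r hr
    rw [MonoidHom.mem_ker, map_commutatorElement]
    exact commutatorElement_eq_one_iff_commute.mpr (wHom_central G₁ G₂ hr _)
  exact this hx

/-- τ on the numerator subgroup -/
noncomputable def τ₀ : ↥(hNum (π' G₁ G₂)) →* Multiplicative (TT G₁ G₂) :=
  MonoidHom.mk' (fun x => Multiplicative.ofAdd (wHom G₁ G₂ x.1).t) (by
    intro x y
    have hx1 : (wHom G₁ G₂ x.1).a = 1 := by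
      rw [wHom_a, MonoidHom.mem_ker.mp x.2.1]; exact map_one _
    show Multiplicative.ofAdd (wHom G₁ G₂ ((x.1 : FreeGroup (G₁ ⊕ G₂)) * y.1)).t = _
    rw [map_mul]
    show Multiplicative.ofAdd ((wHom G₁ G₂ x.1).t + (wHom G₁ G₂ y.1).t +
      (Additive.ofMul (wHom G₁ G₂ x.1).a) ⊗ₜ[ℤ] (Additive.ofMul (wHom G₁ G₂ y.1).b)) = _
    rw [hx1]
    simp only [ofMul_one, TensorProduct.zero_tmul, add_zero]
    rfl)

/-- τ on the Hopf quotient -/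
noncomputable def τ : Hopf (π' G₁ G₂) →* Multiplicative (TT G₁ G₂) := by
  refine QuotientGroup.lift _ (τ₀ G₁ G₂) ?_
  intro x hx
  rw [Subgroup.mem_subgroupOf] at hx
  show Multiplicative.ofAdd (wHom G₁ G₂ x.1).t = 1
  rw [wHom_den G₁ G₂ _ hx]
  rfl

lemma τ_mk (x : FreeGroup (G₁ ⊕ G₂)) (hx : x ∈ hNum (π' G₁ G₂)) :
    τ G₁ G₂ (hMk _ x hx) = Multiplicative.ofAdd (wHom G₁ G₂ x).t := rfl

/-- key computation: commutator in WGrp -/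
lemma wgrp_commutator (a : Abelianization G₁) (b : Abelianization G₂) :
    ⁅(⟨a, 1, 0⟩ : WGrp G₁ G₂), (⟨1, b, 0⟩ : WGrp G₁ G₂)⁆ =
      ⟨1, 1, (Additive.ofMul a) ⊗ₜ[ℤ] (Additive.ofMul b)⟩ := by
  rw [commutatorElement_def]
  refine WGrp.extt _ _ ?_ ?_ ?_
  · show a * 1 * a⁻¹ * 1⁻¹ = 1
    group
  · show 1 * b * 1⁻¹ * b⁻¹ = 1
    group
  · simp only [WGrp.mul_def, WGrp.inv_def]
    simp only [ofMul_one, TensorProduct.zero_tmul, TensorProduct.tmul_zero, ofMul_mul,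
      ofMul_inv, TensorProduct.neg_tmul, TensorProduct.add_tmul, TensorProduct.tmul_add,
      mul_one, one_mul, TensorProduct.tmul_neg]
    abel

lemma wHom_I₁ (x : FreeGroup G₁) :
    wHom G₁ G₂ (Imap₁ G₁ G₂ x) = ⟨Abelianization.of (presentation G₁ x), 1, 0⟩ := by
  induction x using FreeGroup.induction_on with
  | C1 => simp only [map_one]; rfl
  | of g =>
      show wHom G₁ G₂ (Imap₁ G₁ G₂ (FreeGroup.of g)) = _
      rw [Imap₁, FreeGroup.map.of]
      simp [wHom, presentation]
  | inv_of g ih =>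
      rw [map_inv, map_inv, ih, WGrp.inv_def]
      refine WGrp.extt _ _ (by simp [map_inv]) (by simp) (by simp [ofMul_one])
  | mul x y ihx ihy =>
      rw [map_mul, map_mul, ihx, ihy, WGrp.mul_def]
      refine WGrp.extt _ _ (by simp [map_mul]) (by simp) (by simp [ofMul_one])

lemma wHom_I₂ (x : FreeGroup G₂) :
    wHom G₁ G₂ (Imap₂ G₁ G₂ x) = ⟨1, Abelianization.of (presentation G₂ x), 0⟩ := by
  induction x using FreeGroup.induction_on with
  | C1 => simp only [map_one]; rfl
  | of g =>
      show wHom G₁ G₂ (Imap₂ G₁ G₂ (FreeGroup.of g)) = _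
      rw [Imap₂, FreeGroup.map.of]
      simp [wHom, presentation]
  | inv_of g ih =>
      rw [map_inv, map_inv, ih, WGrp.inv_def]
      refine WGrp.extt _ _ (by simp) (by simp [map_inv]) (by simp [ofMul_one])
  | mul x y ihx ihy =>
      rw [map_mul, map_mul, ihx, ihy, WGrp.mul_def]
      refine WGrp.extt _ _ (by simp) (by simp [map_mul]) (by simp [ofMul_one])

end Tau

section Bilinear

-- generic commutator identities with central corrections
lemma comm_mul_left_central {Q : Type*} [Group Q] (u v w c : Q)
    (hc : ∀ q, Commute c q) (hvw : ∀ q, Commute ⁅v, w⁆ q) :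
    ⁅u * v * c, w⁆ = ⁅u, w⁆ * ⁅v, w⁆ := by
  calc ⁅u * v * c, w⁆ = u*v*(c*w*c⁻¹)*v⁻¹*u⁻¹*w⁻¹ := by
        rw [commutatorElement_def]; group
    _ = u*v*w*v⁻¹*u⁻¹*w⁻¹ := by rw [(hc w).eq]; group
    _ = u*⁅v,w⁆*w*u⁻¹*w⁻¹ := by rw [commutatorElement_def]; group
    _ = ⁅v,w⁆*(u*w*u⁻¹*w⁻¹) := by rw [← (hvw u).eq]; group
    _ = ⁅v,w⁆*⁅u,w⁆ := by rw [commutatorElement_def]; group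
    _ = ⁅u,w⁆*⁅v,w⁆ := (hvw ⁅u,w⁆).eq

lemma comm_mul_right_central {Q : Type*} [Group Q] (u w w' c : Q)
    (hc : ∀ q, Commute c q) (huw' : ∀ q, Commute ⁅u, w'⁆ q) :
    ⁅u, w * w' * c⁆ = ⁅u, w⁆ * ⁅u, w'⁆ := by
  calc ⁅u, w * w' * c⁆ = u*w*w'*(c*u⁻¹*c⁻¹)*w'⁻¹*w⁻¹ := by
        rw [commutatorElement_def]; group
    _ = u*w*w'*u⁻¹*w'⁻¹*w⁻¹ := by rw [(hc u⁻¹).eq]; group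
    _ = ⁅u,w⁆*(w*⁅u,w'⁆*w⁻¹) := by rw [commutatorElement_def, commutatorElement_def]; group
    _ = ⁅u,w⁆*(⁅u,w'⁆*w*w⁻¹) := by rw [← (huw' w).eq]
    _ = ⁅u,w⁆*⁅u,w'⁆ := by group

section
variable {F G : Type*} [Group F] [Group G]

lemma mkQ_ker_central (π : F →* G) {r : F} (hr : r ∈ π.ker) (q : F ⧸ hDen π) :
    Commute (QuotientGroup.mk r) q := by
  induction q using QuotientGroup.induction_on with
  | _ f =>
  show QuotientGroup.mk r * QuotientGroup.mk f = QuotientGroup.mk f * QuotientGroup.mk r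
  rw [← QuotientGroup.mk_mul, ← QuotientGroup.mk_mul]
  exact ker_comm_mod_den π hr

lemma hMk_eq_iff_Q (π : F →* G) (x y : F) (hx : x ∈ hNum π) (hy : y ∈ hNum π) :
    hMk π x hx = hMk π y hy ↔
      (QuotientGroup.mk x : F ⧸ hDen π) = QuotientGroup.mk y := by
  rw [hMk_eq_iff, QuotientGroup.eq]

lemma mkQ_commutator (π : F →* G) (x y : F) :
    (QuotientGroup.mk ⁅x, y⁆ : F ⧸ hDen π) =
      ⁅(QuotientGroup.mk x : F ⧸ hDen π), QuotientGroup.mk y⁆ := by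
  rw [commutatorElement_def, commutatorElement_def]
  rfl

end

variable (G₁ G₂ : Type*) [Group G₁] [Group G₂]

lemma letter_inl (g : G₁) : π' G₁ G₂ (FreeGroup.of (Sum.inl g)) = (g, 1) := by
  simp [π']

lemma letter_inr (h : G₂) : π' G₁ G₂ (FreeGroup.of (Sum.inr h)) = (1, h) := by
  simp [π']

lemma comm_mem_ker (g : G₁) (h : G₂) :
    ⁅(FreeGroup.of (Sum.inl g) : FreeGroup (G₁ ⊕ G₂)), FreeGroup.of (Sum.inr h)⁆ ∈
      (π' G₁ G₂).ker := by
  rw [MonoidHom.mem_ker, map_commutatorElement, letter_inl, letter_inr,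
    commutatorElement_def]
  ext <;> simp

lemma comm_mem_hNum (g : G₁) (h : G₂) :
    ⁅(FreeGroup.of (Sum.inl g) : FreeGroup (G₁ ⊕ G₂)), FreeGroup.of (Sum.inr h)⁆ ∈
      hNum (π' G₁ G₂) :=
  ⟨comm_mem_ker G₁ G₂ g h,
    Subgroup.commutator_mem_commutator (Subgroup.mem_top _) (Subgroup.mem_top _)⟩

/-- the class of the commutator `[of (inl g), of (inr h)]` in the Hopf quotient -/
noncomputable def cElt (g : G₁) (h : G₂) : Hopf (π' G₁ G₂) :=
  hMk _ _ (comm_mem_hNum G₁ G₂ g h)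

lemma rcorr_inl_mem (g g' : G₁) :
    (FreeGroup.of (Sum.inl g) * FreeGroup.of (Sum.inl g'))⁻¹ *
      FreeGroup.of (Sum.inl (g * g') : G₁ ⊕ G₂) ∈ (π' G₁ G₂).ker := by
  rw [MonoidHom.mem_ker, map_mul, map_inv, map_mul, letter_inl, letter_inl, letter_inl]
  ext <;> simp <;> group

lemma rcorr_inr_mem (h h' : G₂) :
    (FreeGroup.of (Sum.inr h) * FreeGroup.of (Sum.inr h'))⁻¹ *
      FreeGroup.of (Sum.inr (h * h') : G₁ ⊕ G₂) ∈ (π' G₁ G₂).ker := by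
  rw [MonoidHom.mem_ker, map_mul, map_inv, map_mul, letter_inr, letter_inr, letter_inr]
  ext <;> simp <;> group

lemma cElt_mul_left (g g' : G₁) (h : G₂) :
    cElt G₁ G₂ (g * g') h = cElt G₁ G₂ g h * cElt G₁ G₂ g' h := by
  unfold cElt
  rw [← hMk_mul, hMk_eq_iff_Q]
  set Q := FreeGroup (G₁ ⊕ G₂) ⧸ hDen (π' G₁ G₂)
  set u : Q := QuotientGroup.mk (FreeGroup.of (Sum.inl g)) with hu
  set v : Q := QuotientGroup.mk (FreeGroup.of (Sum.inl g')) with hv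
  set w : Q := QuotientGroup.mk (FreeGroup.of (Sum.inr h)) with hw
  have hsplit : (QuotientGroup.mk (FreeGroup.of (Sum.inl (g * g') : G₁ ⊕ G₂)) : Q) =
      u * v * QuotientGroup.mk ((FreeGroup.of (Sum.inl g) * FreeGroup.of (Sum.inl g'))⁻¹ *
        FreeGroup.of (Sum.inl (g * g') : G₁ ⊕ G₂)) := by
    rw [hu, hv, ← QuotientGroup.mk_mul, ← QuotientGroup.mk_mul]
    congr 1
    group
  rw [QuotientGroup.mk_mul]
  simp only [mkQ_commutator]
  rw [hsplit]
  exact comm_mul_left_central u v w _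
    (mkQ_ker_central _ (rcorr_inl_mem G₁ G₂ g g'))
    (by rw [hv, hw, ← mkQ_commutator]
        exact mkQ_ker_central _ (comm_mem_ker G₁ G₂ g' h))

lemma cElt_mul_right (g : G₁) (h h' : G₂) :
    cElt G₁ G₂ g (h * h') = cElt G₁ G₂ g h * cElt G₁ G₂ g h' := by
  unfold cElt
  rw [← hMk_mul, hMk_eq_iff_Q]
  set Q := FreeGroup (G₁ ⊕ G₂) ⧸ hDen (π' G₁ G₂)
  set u : Q := QuotientGroup.mk (FreeGroup.of (Sum.inl g)) with hu
  set w : Q := QuotientGroup.mk (FreeGroup.of (Sum.inr h)) with hw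
  set w' : Q := QuotientGroup.mk (FreeGroup.of (Sum.inr h')) with hw'
  have hsplit : (QuotientGroup.mk (FreeGroup.of (Sum.inr (h * h') : G₁ ⊕ G₂)) : Q) =
      w * w' * QuotientGroup.mk ((FreeGroup.of (Sum.inr h) * FreeGroup.of (Sum.inr h'))⁻¹ *
        FreeGroup.of (Sum.inr (h * h') : G₁ ⊕ G₂)) := by
    rw [hw, hw', ← QuotientGroup.mk_mul, ← QuotientGroup.mk_mul]
    congr 1
    group
  rw [QuotientGroup.mk_mul]
  simp only [mkQ_commutator]
  rw [hsplit]
  exact comm_mul_right_central u w w' _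
    (mkQ_ker_central _ (rcorr_inr_mem G₁ G₂ h h'))
    (by rw [hu, hw', ← mkQ_commutator]
        exact mkQ_ker_central _ (comm_mem_ker G₁ G₂ g h'))

end Bilinear

section Theta

noncomputable instance hopfCommGroup {F G : Type*} [Group F] [Group G] (π : F →* G) :
    CommGroup (Hopf π) :=
  { (inferInstance : Group (Hopf π)) with mul_comm := hopf_mul_comm π }

variable (G₁ G₂ : Type*) [Group G₁] [Group G₂]

/-- lift of `cElt` in the first variable to the abelianization -/
noncomputable def cAb1 (h : G₂) : Abelianization G₁ →* Hopf (π' G₁ G₂) :=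
  Abelianization.lift (MonoidHom.mk' (fun g => cElt G₁ G₂ g h)
    (fun g g' => cElt_mul_left G₁ G₂ g g' h))

lemma cAb1_of (g : G₁) (h : G₂) : cAb1 G₁ G₂ h (Abelianization.of g) = cElt G₁ G₂ g h :=
  rfl

/-- lift of `cElt` to both abelianizations -/
noncomputable def cAb2 : Abelianization G₂ →* (Abelianization G₁ →* Hopf (π' G₁ G₂)) :=
  Abelianization.lift (MonoidHom.mk' (fun h => cAb1 G₁ G₂ h) (by
    intro h h'
    apply Abelianization.hom_ext
    apply MonoidHom.ext
    intro g
    show cElt G₁ G₂ g (h * h') = cAb1 G₁ G₂ h (Abelianization.of g) *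
      cAb1 G₁ G₂ h' (Abelianization.of g)
    rw [cAb1_of, cAb1_of]
    exact cElt_mul_right G₁ G₂ g h h'))

lemma cAb2_of (g : G₁) (h : G₂) :
    cAb2 G₁ G₂ (Abelianization.of h) (Abelianization.of g) = cElt G₁ G₂ g h := rfl

/-- the biadditive version -/
noncomputable def θbil : Additive (Abelianization G₁) →+
    (Additive (Abelianization G₂) →+ Additive (Hopf (π' G₁ G₂))) :=
  AddMonoidHom.mk' (fun a => AddMonoidHom.mk'
      (fun b => Additive.ofMul (cAb2 G₁ G₂ b.toMul a.toMul))
      (fun b b' => by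
        show Additive.ofMul (cAb2 G₁ G₂ (b.toMul * b'.toMul) a.toMul) = _
        rw [map_mul]
        rfl))
    (fun a a' => by
      apply AddMonoidHom.ext
      intro b
      show Additive.ofMul (cAb2 G₁ G₂ b.toMul (a.toMul * a'.toMul)) = _
      rw [map_mul]
      rfl)

/-- the homomorphism from the tensor product into the Hopf quotient -/
noncomputable def θAdd : TT G₁ G₂ →+ Additive (Hopf (π' G₁ G₂)) :=
  TensorProduct.liftAddHom (θbil G₁ G₂) (by
    intro n a b
    rw [map_zsmul (θbil G₁ G₂) n a, AddMonoidHom.smul_apply, ← map_zsmul])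

noncomputable def θfun (t : TT G₁ G₂) : Hopf (π' G₁ G₂) := (θAdd G₁ G₂ t).toMul

lemma θfun_add (t t' : TT G₁ G₂) :
    θfun G₁ G₂ (t + t') = θfun G₁ G₂ t * θfun G₁ G₂ t' := by
  unfold θfun
  rw [map_add]
  rfl

lemma θfun_tmul (g : G₁) (h : G₂) :
    θfun G₁ G₂ ((Additive.ofMul (Abelianization.of g)) ⊗ₜ[ℤ]
      (Additive.ofMul (Abelianization.of h))) = cElt G₁ G₂ g h := by
  unfold θfun θAdd
  rw [TensorProduct.liftAddHom_tmul]
  rfl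

end Theta

section Components

variable (G₁ G₂ : Type*) [Group G₁] [Group G₂]

lemma ab_surj {G : Type*} [Group G] : Function.Surjective (Abelianization.of (G := G)) :=
  fun a => QuotientGroup.induction_on a (fun g => ⟨g, rfl⟩)

lemma hMk_one {F G : Type*} [Group F] [Group G] (π : F →* G) (h1 : (1:F) ∈ hNum π) :
    hMk π 1 h1 = 1 := rfl

lemma hMk_eq_one {F G : Type*} [Group F] [Group G] (π : F →* G) (x : F) (hx : x ∈ hNum π) :
    hMk π x hx = 1 ↔ x ∈ hDen π := by
  rw [hMk, QuotientGroup.eq_one_iff, Subgroup.mem_subgroupOf]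

lemma wHom_letter_inl (g : G₁) :
    wHom G₁ G₂ (FreeGroup.of (Sum.inl g)) = ⟨Abelianization.of g, 1, 0⟩ := by
  simp [wHom]

lemma wHom_letter_inr (h : G₂) :
    wHom G₁ G₂ (FreeGroup.of (Sum.inr h)) = ⟨1, Abelianization.of h, 0⟩ := by
  simp [wHom]

lemma τ_cElt (g : G₁) (h : G₂) :
    τ G₁ G₂ (cElt G₁ G₂ g h) = Multiplicative.ofAdd
      ((Additive.ofMul (Abelianization.of g)) ⊗ₜ[ℤ] (Additive.ofMul (Abelianization.of h))) := by
  rw [cElt, τ_mk, map_commutatorElement, wHom_letter_inl, wHom_letter_inr, wgrp_commutator]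

lemma τ_θfun (t : TT G₁ G₂) : τ G₁ G₂ (θfun G₁ G₂ t) = Multiplicative.ofAdd t := by
  induction t using TensorProduct.induction_on with
  | zero =>
      show τ G₁ G₂ (θAdd G₁ G₂ 0).toMul = _
      rw [map_zero]
      exact map_one (τ G₁ G₂)
  | tmul a b =>
      obtain ⟨g, rfl⟩ := ab_surj a.toMul
      obtain ⟨h, rfl⟩ := ab_surj b.toMul
      exact τ_cElt G₁ G₂ g h
  | add t t' ht ht' =>
      rw [θfun_add, map_mul, ht, ht']
      rfl

lemma τ_ΨH₁ (q : Hopf (presentation G₁)) : τ G₁ G₂ (ΨH₁ G₁ G₂ q) = 1 := by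
  induction q using QuotientGroup.induction_on with
  | _ x =>
  show τ G₁ G₂ (hMk _ (Imap₁ G₁ G₂ x.1) _) = 1
  refine (τ_mk G₁ G₂ _ _).trans ?_
  rw [wHom_I₁]
  rfl

lemma τ_ΨH₂ (q : Hopf (presentation G₂)) : τ G₁ G₂ (ΨH₂ G₁ G₂ q) = 1 := by
  induction q using QuotientGroup.induction_on with
  | _ x =>
  show τ G₁ G₂ (hMk _ (Imap₂ G₁ G₂ x.1) _) = 1
  refine (τ_mk G₁ G₂ _ _).trans ?_
  rw [wHom_I₂]
  rfl

lemma P₁_I₁ : (Pmap₁ G₁ G₂).comp (Imap₁ G₁ G₂) = MonoidHom.id _ := by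
  apply FreeGroup.ext_hom
  intro g
  simp [Pmap₁, Imap₁]

lemma P₂_I₂ : (Pmap₂ G₁ G₂).comp (Imap₂ G₁ G₂) = MonoidHom.id _ := by
  apply FreeGroup.ext_hom
  intro g
  simp [Pmap₂, Imap₂]

lemma P₂_I₁ (x : FreeGroup G₁) : Pmap₂ G₁ G₂ (Imap₁ G₁ G₂ x) = 1 := by
  have : (Pmap₂ G₁ G₂).comp (Imap₁ G₁ G₂) = 1 := by
    apply FreeGroup.ext_hom
    intro g
    simp [Pmap₂, Imap₁]
  exact DFunLike.congr_fun this x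

lemma P₁_I₂ (x : FreeGroup G₂) : Pmap₁ G₁ G₂ (Imap₂ G₁ G₂ x) = 1 := by
  have : (Pmap₁ G₁ G₂).comp (Imap₂ G₁ G₂) = 1 := by
    apply FreeGroup.ext_hom
    intro g
    simp [Pmap₁, Imap₂]
  exact DFunLike.congr_fun this x

lemma ΦH₁_ΨH₁ (q : Hopf (presentation G₁)) : ΦH₁ G₁ G₂ (ΨH₁ G₁ G₂ q) = q := by
  rw [ΨH₁, ΦH₁, hopfMap_comp]
  exact hopfMap_self _ _ (fun x => by rw [P₁_I₁]; rfl) q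

lemma ΦH₂_ΨH₂ (q : Hopf (presentation G₂)) : ΦH₂ G₁ G₂ (ΨH₂ G₁ G₂ q) = q := by
  rw [ΨH₂, ΦH₂, hopfMap_comp]
  exact hopfMap_self _ _ (fun x => by rw [P₂_I₂]; rfl) q

lemma ΦH₁_ΨH₂ (q : Hopf (presentation G₂)) : ΦH₁ G₁ G₂ (ΨH₂ G₁ G₂ q) = 1 := by
  induction q using QuotientGroup.induction_on with
  | _ x =>
  show hMk _ (Pmap₁ G₁ G₂ (Imap₂ G₁ G₂ x.1)) _ = 1
  apply (hMk_eq_one _ _ _).mpr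
  rw [P₁_I₂]
  exact one_mem _

lemma ΦH₁_cElt (g : G₁) (h : G₂) : ΦH₁ G₁ G₂ (cElt G₁ G₂ g h) = 1 := by
  unfold ΦH₁ cElt
  rw [hopfMap_mk, hMk_eq_one, map_commutatorElement]
  have h1 : Pmap₁ G₁ G₂ (FreeGroup.of (Sum.inr h)) = 1 := by simp [Pmap₁]
  rw [h1]
  simp only [commutatorElement_one_right]
  exact one_mem _

lemma ΦH₂_cElt (g : G₁) (h : G₂) : ΦH₂ G₁ G₂ (cElt G₁ G₂ g h) = 1 := by
  unfold ΦH₂ cElt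
  rw [hopfMap_mk, hMk_eq_one, map_commutatorElement]
  have h1 : Pmap₂ G₁ G₂ (FreeGroup.of (Sum.inl g)) = 1 := by simp [Pmap₂]
  rw [h1]
  simp only [commutatorElement_one_left]
  exact one_mem _

lemma ΦH₁_θfun (t : TT G₁ G₂) : ΦH₁ G₁ G₂ (θfun G₁ G₂ t) = 1 := by
  induction t using TensorProduct.induction_on with
  | zero =>
      show ΦH₁ G₁ G₂ (θAdd G₁ G₂ 0).toMul = 1
      rw [map_zero]
      exact map_one _
  | tmul a b =>
      obtain ⟨g, rfl⟩ := ab_surj a.toMul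
      obtain ⟨h, rfl⟩ := ab_surj b.toMul
      show ΦH₁ G₁ G₂ (θfun G₁ G₂ ((Additive.ofMul (Abelianization.of g)) ⊗ₜ[ℤ]
        (Additive.ofMul (Abelianization.of h)))) = 1
      rw [θfun_tmul]
      exact ΦH₁_cElt G₁ G₂ _ _
  | add t t' ht ht' =>
      rw [θfun_add, map_mul, ht, ht', one_mul]

lemma ΦH₂_θfun (t : TT G₁ G₂) : ΦH₂ G₁ G₂ (θfun G₁ G₂ t) = 1 := by
  induction t using TensorProduct.induction_on with
  | zero =>
      show ΦH₂ G₁ G₂ (θAdd G₁ G₂ 0).toMul = 1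
      rw [map_zero]
      exact map_one _
  | tmul a b =>
      obtain ⟨g, rfl⟩ := ab_surj a.toMul
      obtain ⟨h, rfl⟩ := ab_surj b.toMul
      show ΦH₂ G₁ G₂ (θfun G₁ G₂ ((Additive.ofMul (Abelianization.of g)) ⊗ₜ[ℤ]
        (Additive.ofMul (Abelianization.of h)))) = 1
      rw [θfun_tmul]
      exact ΦH₂_cElt G₁ G₂ _ _
  | add t t' ht ht' =>
      rw [θfun_add, map_mul, ht, ht', one_mul]

lemma ΦH₂_ΨH₁ (q : Hopf (presentation G₁)) : ΦH₂ G₁ G₂ (ΨH₁ G₁ G₂ q) = 1 := by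
  induction q using QuotientGroup.induction_on with
  | _ x =>
  show hMk _ (Pmap₂ G₁ G₂ (Imap₁ G₁ G₂ x.1)) _ = 1
  apply (hMk_eq_one _ _ _).mpr
  rw [P₂_I₁]
  exact one_mem _

end Components

section Surjectivity

variable (G₁ G₂ : Type*) [Group G₁] [Group G₂]

/-- the retraction onto the product of free groups -/
def ρmap : FreeGroup (G₁ ⊕ G₂) →* FreeGroup G₁ × FreeGroup G₂ :=
  (Pmap₁ G₁ G₂).prod (Pmap₂ G₁ G₂)

/-- the set of basic mixed commutators -/
def Sset : Set (FreeGroup (G₁ ⊕ G₂)) :=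
  {x | ∃ g h, x = ⁅(FreeGroup.of (Sum.inl g) : FreeGroup (G₁ ⊕ G₂)), FreeGroup.of (Sum.inr h)⁆}

lemma Sset_sub_hNum : Sset G₁ G₂ ⊆ (hNum (π' G₁ G₂) : Set _) := by
  rintro x ⟨g, h, rfl⟩
  exact comm_mem_hNum G₁ G₂ g h

lemma Sset_closure_le_hNum : Subgroup.closure (Sset G₁ G₂) ≤ hNum (π' G₁ G₂) :=
  (Subgroup.closure_le _).mpr (Sset_sub_hNum G₁ G₂)

lemma ker_ρ_le_normalClosure :
    (ρmap G₁ G₂).ker ≤ Subgroup.normalClosure (Sset G₁ G₂) := by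
  set N := Subgroup.normalClosure (Sset G₁ G₂)
  set mkN : FreeGroup (G₁ ⊕ G₂) →* FreeGroup (G₁ ⊕ G₂) ⧸ N := QuotientGroup.mk' N
  have comm : ∀ (u : FreeGroup G₁) (v : FreeGroup G₂),
      Commute (mkN (Imap₁ G₁ G₂ u)) (mkN (Imap₂ G₁ G₂ v)) := by
    intro u v
    induction u using FreeGroup.induction_on with
    | C1 => simp only [map_one]; exact Commute.one_left _
    | of g =>
        induction v using FreeGroup.induction_on with
        | C1 => simp only [map_one]; exact Commute.one_right _
        | of h =>
            rw [← commutatorElement_eq_one_iff_commute]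
            calc ⁅mkN (Imap₁ G₁ G₂ (pure g)), mkN (Imap₂ G₁ G₂ (pure h))⁆
                = mkN ⁅Imap₁ G₁ G₂ (pure g), Imap₂ G₁ G₂ (pure h)⁆ :=
                  (map_commutatorElement _ _ _).symm
              _ = mkN ⁅(FreeGroup.of (Sum.inl g) : FreeGroup (G₁ ⊕ G₂)),
                    FreeGroup.of (Sum.inr h)⁆ := by
                  rw [show Imap₁ G₁ G₂ (pure g) = FreeGroup.of (Sum.inl g) from by
                      rw [Imap₁]; exact FreeGroup.map.of,
                    show Imap₂ G₁ G₂ (pure h) = FreeGroup.of (Sum.inr h) from by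
                      rw [Imap₂]; exact FreeGroup.map.of]
              _ = 1 := by
                  rw [QuotientGroup.mk'_apply, QuotientGroup.eq_one_iff]
                  exact Subgroup.subset_normalClosure ⟨g, h, rfl⟩
        | inv_of h ih => rw [map_inv, map_inv]; exact ih.inv_right
        | mul v₁ v₂ ih₁ ih₂ => rw [map_mul, map_mul]; exact ih₁.mul_right ih₂
    | inv_of g ih => rw [map_inv, map_inv]; exact ih.inv_left
    | mul u₁ u₂ ih₁ ih₂ => rw [map_mul, map_mul]; exact ih₁.mul_left ih₂
  set j : FreeGroup G₁ × FreeGroup G₂ →* FreeGroup (G₁ ⊕ G₂) ⧸ N :=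
    MonoidHom.noncommCoprod (mkN.comp (Imap₁ G₁ G₂)) (mkN.comp (Imap₂ G₁ G₂)) comm
  have hj : j.comp (ρmap G₁ G₂) = mkN := by
    apply FreeGroup.ext_hom
    rintro (g | g) <;>
      simp [j, ρmap, MonoidHom.noncommCoprod, Pmap₁, Pmap₂, Imap₁, Imap₂, mkN]
  intro x hx
  have : mkN x = 1 := by
    rw [← hj]
    show j (ρmap G₁ G₂ x) = 1
    rw [MonoidHom.mem_ker.mp hx, map_one]
  rwa [QuotientGroup.mk'_apply, QuotientGroup.eq_one_iff] at this

lemma mkQ_Sset_central (s : FreeGroup (G₁ ⊕ G₂)) (hs : s ∈ Sset G₁ G₂) :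
    (QuotientGroup.mk s : FreeGroup (G₁ ⊕ G₂) ⧸ hDen (π' G₁ G₂)) ∈
      Subgroup.center _ := by
  obtain ⟨g, h, rfl⟩ := hs
  rw [Subgroup.mem_center_iff]
  intro q
  exact (mkQ_ker_central _ (comm_mem_ker G₁ G₂ g h) q).symm.eq

lemma mkQ_normalClosure_le :
    ∀ x ∈ Subgroup.normalClosure (Sset G₁ G₂),
      (QuotientGroup.mk x : FreeGroup (G₁ ⊕ G₂) ⧸ hDen (π' G₁ G₂)) ∈
        Subgroup.map (QuotientGroup.mk' (hDen (π' G₁ G₂))) (Subgroup.closure (Sset G₁ G₂)) := by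
  set mkQ : FreeGroup (G₁ ⊕ G₂) →* FreeGroup (G₁ ⊕ G₂) ⧸ hDen (π' G₁ G₂) :=
    QuotientGroup.mk' (hDen (π' G₁ G₂))
  set C := Subgroup.map mkQ (Subgroup.closure (Sset G₁ G₂))
  have hC : C = Subgroup.closure (mkQ '' (Sset G₁ G₂)) :=
    (MonoidHom.map_closure mkQ _)
  have hCcentral : C ≤ Subgroup.center _ := by
    rw [hC]
    apply (Subgroup.closure_le _).mpr
    rintro y ⟨s, hs, rfl⟩
    exact mkQ_Sset_central G₁ G₂ s hs
  haveI hCnormal : C.Normal := by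
    constructor
    intro n hn q
    have hqn := Subgroup.mem_center_iff.mp (hCcentral hn) q
    have : q * n * q⁻¹ = n := by rw [hqn]; group
    rw [this]
    exact hn
  have hle : Subgroup.normalClosure (Sset G₁ G₂) ≤ Subgroup.comap mkQ C := by
    haveI : (Subgroup.comap mkQ C).Normal := hCnormal.comap mkQ
    apply Subgroup.normalClosure_le_normal
    intro s hs
    exact Subgroup.mem_comap.mpr (Subgroup.mem_map_of_mem mkQ (Subgroup.subset_closure hs))
  intro x hx
  exact Subgroup.mem_comap.mp (hle hx)

lemma θ_covers : ∀ c ∈ Subgroup.closure (Sset G₁ G₂),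
    ∃ (t : TT G₁ G₂) (hc : c ∈ hNum (π' G₁ G₂)), θfun G₁ G₂ t = hMk _ c hc := by
  intro c hc
  induction hc using Subgroup.closure_induction with
  | mem s hs =>
      obtain ⟨g, h, rfl⟩ := hs
      exact ⟨_, comm_mem_hNum G₁ G₂ g h, θfun_tmul G₁ G₂ g h⟩
  | one =>
      refine ⟨0, (hNum (π' G₁ G₂)).one_mem, ?_⟩
      show (θAdd G₁ G₂ 0).toMul = _
      rw [map_zero]
      rfl
  | mul c₁ c₂ hc₁ hc₂ ih₁ ih₂ =>
      obtain ⟨t₁, m₁, e₁⟩ := ih₁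
      obtain ⟨t₂, m₂, e₂⟩ := ih₂
      exact ⟨t₁ + t₂, (hNum _).mul_mem m₁ m₂, by rw [θfun_add, e₁, e₂, hMk_mul]⟩
  | inv c₁ hc₁ ih =>
      obtain ⟨t₁, m₁, e₁⟩ := ih
      refine ⟨-t₁, (hNum _).inv_mem m₁, ?_⟩
      have : θfun G₁ G₂ (-t₁) = (θfun G₁ G₂ t₁)⁻¹ := by
        unfold θfun
        rw [map_neg]
        rfl
      rw [this, e₁]
      rfl

/-- every element of the Hopf quotient decomposes -/
lemma hopf_decomp (q : Hopf (π' G₁ G₂)) :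
    ∃ (q₁ : Hopf (presentation G₁)) (q₂ : Hopf (presentation G₂)) (t : TT G₁ G₂),
      q = ΨH₁ G₁ G₂ q₁ * ΨH₂ G₁ G₂ q₂ * θfun G₁ G₂ t := by
  induction q using QuotientGroup.induction_on with
  | _ xs =>
  obtain ⟨x, hx⟩ := xs
  set f₁ := Pmap₁ G₁ G₂ x with hf₁
  set f₂ := Pmap₂ G₁ G₂ x with hf₂
  have hf₁mem : f₁ ∈ hNum (presentation G₁) :=
    hNum_map _ _ _ (fun y hy => by rw [P₁_compat, hy]; rfl) hx
  have hf₂mem : f₂ ∈ hNum (presentation G₂) :=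
    hNum_map _ _ _ (fun y hy => by rw [P₂_compat, hy]; rfl) hx
  set d := (Imap₁ G₁ G₂ f₁ * Imap₂ G₁ G₂ f₂)⁻¹ * x with hd
  have hdker : d ∈ (ρmap G₁ G₂).ker := by
    rw [MonoidHom.mem_ker, hd, map_mul, map_inv, map_mul]
    have e1 : ρmap G₁ G₂ (Imap₁ G₁ G₂ f₁) = (f₁, 1) := by
      rw [ρmap, MonoidHom.prod_apply]
      have := DFunLike.congr_fun (P₁_I₁ G₁ G₂) f₁
      rw [MonoidHom.comp_apply] at this
      rw [this, P₂_I₁]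
      rfl
    have e2 : ρmap G₁ G₂ (Imap₂ G₁ G₂ f₂) = (1, f₂) := by
      rw [ρmap, MonoidHom.prod_apply]
      have := DFunLike.congr_fun (P₂_I₂ G₁ G₂) f₂
      rw [MonoidHom.comp_apply] at this
      rw [this, P₁_I₂]
      rfl
    have e3 : ρmap G₁ G₂ x = (f₁, f₂) := by
      rw [ρmap, MonoidHom.prod_apply, ← hf₁, ← hf₂]
    rw [e1, e2, e3]
    ext <;> simp
  -- pass to Q and replace d by an element of the closure
  have hmkd := mkQ_normalClosure_le G₁ G₂ d (ker_ρ_le_normalClosure G₁ G₂ hdker)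
  obtain ⟨d', hd'mem, hd'eq⟩ := hmkd
  obtain ⟨t, hd'num, hθ⟩ := θ_covers G₁ G₂ d' hd'mem
  have hI₁mem : Imap₁ G₁ G₂ f₁ ∈ hNum (π' G₁ G₂) :=
    hNum_map _ _ _ (fun y hy => by rw [I₁_compat, hy]; exact Prod.mk_one_one) hf₁mem
  have hI₂mem : Imap₂ G₁ G₂ f₂ ∈ hNum (π' G₁ G₂) :=
    hNum_map _ _ _ (fun y hy => by rw [I₂_compat, hy]; exact Prod.mk_one_one) hf₂mem
  refine ⟨hMk _ f₁ hf₁mem, hMk _ f₂ hf₂mem, t, ?_⟩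
  show hMk _ x hx = _
  rw [show ΨH₁ G₁ G₂ (hMk _ f₁ hf₁mem) = hMk _ (Imap₁ G₁ G₂ f₁) hI₁mem from rfl,
    show ΨH₂ G₁ G₂ (hMk _ f₂ hf₂mem) = hMk _ (Imap₂ G₁ G₂ f₂) hI₂mem from rfl, hθ,
    ← hMk_mul, ← hMk_mul, hMk_eq_iff_Q]
  have hxsplit : x = Imap₁ G₁ G₂ f₁ * Imap₂ G₁ G₂ f₂ * d := by
    rw [hd]; group
  rw [hxsplit]
  rw [QuotientGroup.mk_mul, QuotientGroup.mk_mul, QuotientGroup.mk_mul, QuotientGroup.mk_mul]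
  congr 1
  exact hd'eq.symm

end Surjectivity

section Final

variable (G₁ G₂ : Type*) [Group G₁] [Group G₂]

/-- the combined map from the product to the Hopf quotient -/
noncomputable def ΨBig : (Hopf (presentation G₁) × Hopf (presentation G₂) ×
    Multiplicative (TT G₁ G₂)) →* Hopf (π' G₁ G₂) :=
  MonoidHom.mk' (fun p => ΨH₁ G₁ G₂ p.1 * ΨH₂ G₁ G₂ p.2.1 * θfun G₁ G₂ p.2.2.toAdd) (by
    rintro ⟨x, z, u⟩ ⟨y, w, v⟩
    show ΨH₁ G₁ G₂ (x * y) * ΨH₂ G₁ G₂ (z * w) * θfun G₁ G₂ (u.toAdd + v.toAdd) = _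
    rw [map_mul, map_mul, θfun_add, mul_mul_mul_comm (ΨH₁ G₁ G₂ x) (ΨH₁ G₁ G₂ y),
      mul_mul_mul_comm (ΨH₁ G₁ G₂ x * ΨH₂ G₁ G₂ z)])

/-- the combined map from the Hopf quotient to the product -/
noncomputable def ΦBig : Hopf (π' G₁ G₂) →* (Hopf (presentation G₁) ×
    Hopf (presentation G₂) × Multiplicative (TT G₁ G₂)) :=
  (ΦH₁ G₁ G₂).prod ((ΦH₂ G₁ G₂).prod (τ G₁ G₂))

lemma ΦBig_ΨBig (p : Hopf (presentation G₁) × Hopf (presentation G₂) ×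
    Multiplicative (TT G₁ G₂)) : ΦBig G₁ G₂ (ΨBig G₁ G₂ p) = p := by
  obtain ⟨x, z, u⟩ := p
  have hval : ΨBig G₁ G₂ (x, z, u) =
      ΨH₁ G₁ G₂ x * ΨH₂ G₁ G₂ z * θfun G₁ G₂ u.toAdd := rfl
  rw [ΦBig, MonoidHom.prod_apply, MonoidHom.prod_apply, hval]
  refine Prod.ext ?_ (Prod.ext ?_ ?_)
  · show ΦH₁ G₁ G₂ _ = x
    rw [map_mul, map_mul, ΦH₁_ΨH₁, ΦH₁_ΨH₂, ΦH₁_θfun, mul_one, mul_one]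
  · show ΦH₂ G₁ G₂ _ = z
    rw [map_mul, map_mul, ΦH₂_ΨH₁, ΦH₂_ΨH₂, ΦH₂_θfun, mul_one, one_mul]
  · show τ G₁ G₂ _ = u
    rw [map_mul, map_mul, τ_ΨH₁, τ_ΨH₂, τ_θfun, one_mul, one_mul]
    rfl

lemma ΨBig_bijective : Function.Bijective (ΨBig G₁ G₂) := by
  constructor
  · intro p q h
    have := congrArg (ΦBig G₁ G₂) h
    rwa [ΦBig_ΨBig, ΦBig_ΨBig] at this
  · intro q
    obtain ⟨q₁, q₂, t, hq⟩ := hopf_decomp G₁ G₂ q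
    exact ⟨(q₁, q₂, Multiplicative.ofAdd t), hq.symm⟩

/-- the final isomorphism -/
noncomputable def finalEquiv : Hopf (presentation (G₁ × G₂)) ≃*
    (Hopf (presentation G₁) × Hopf (presentation G₂) × Multiplicative (TT G₁ G₂)) :=
  (invEquiv G₁ G₂).trans (MulEquiv.ofBijective _ (ΨBig_bijective G₁ G₂)).symm

end Final

theorem schur_multiplier_of_direct_product (G₁ G₂ : Type*) [Group G₁] [Group G₂]
    [Finite G₁] [Finite G₂] :
    Nonempty (SchurMultiplier (G₁ × G₂) ≃*
      SchurMultiplier G₁ × SchurMultiplier G₂ ×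
        Multiplicative (TensorProduct ℤ (Additive (Abelianization G₁))
          (Additive (Abelianization G₂)))) :=
  ⟨finalEquiv G₁ G₂⟩
end

section
/- If G is a group of order pⁿ for a prime p, then the order of its Schur multiplier M(G) divides p^{n(n-1)/2}. -/
open Subgroup
open scoped commutatorElement

universe u

lemma myNormalOfLeCenter {H : Type u} [Group H] (M : Subgroup H)
    (hM : M ≤ Subgroup.center H) : M.Normal := by
  constructor
  intro m hm g
  have h := Subgroup.mem_center_iff.mp (hM hm) g
  have h2 : g * m * g⁻¹ = m := by rw [h]; group
  rwa [h2]

lemma exp_step (n : ℕ) : n * (n - 1) / 2 + n = (n + 1) * ((n + 1) - 1) / 2 := by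
  rw [← Nat.choose_two_right, ← Nat.choose_two_right]
  rw [Nat.choose_succ_succ, Nat.choose_one_right]
  exact Nat.add_comm _ _

theorem green_aux (p : ℕ) (hp : p.Prime) :
    ∀ (n : ℕ) (H : Type u) [Group H] (M : Subgroup H),
      M ≤ Subgroup.center H → M.index = p ^ n →
      Nat.card ↥(M ⊓ commutator H) ∣ p ^ (n * (n - 1) / 2) := by
  intro n
  induction n with
  | zero =>
    intro H _ M hMle hMidx
    have hMtop : M = ⊤ := Subgroup.index_eq_one.mp (by simpa using hMidx)
    have hcomm : commutator H ≤ ⊥ := by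
      rw [_root_.commutator_def]
      refine Subgroup.commutator_le.mpr fun g _ h _ => ?_
      rw [Subgroup.mem_bot]
      exact commutatorElement_eq_one_iff_commute.mpr
        (Subgroup.mem_center_iff.mp (hMtop ▸ hMle <| Subgroup.mem_top h) g)
    have hbot : M ⊓ commutator H = ⊥ := le_bot_iff.mp (inf_le_right.trans hcomm)
    rw [hbot, Subgroup.card_bot]
    exact one_dvd _
  | succ n ih =>
    intro H _ M hMle hMidx
    haveI hMn : M.Normal := myNormalOfLeCenter M hMle
    haveI : Fact p.Prime := ⟨hp⟩
    have hcen : ∀ x ∈ M, ∀ y : H, x * y = y * x :=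
      fun x hx y => (Subgroup.mem_center_iff.mp (hMle hx) y).symm
    set Q := H ⧸ M with hQdef
    have hQ : Nat.card Q = p ^ (n + 1) := by
      rw [← hMidx]; rfl
    haveI : Finite Q :=
      Nat.finite_of_card_ne_zero (by rw [hQ]; exact pow_ne_zero _ hp.pos.ne')
    haveI : Nontrivial Q := by
      apply Finite.one_lt_card_iff_nontrivial.mp
      rw [hQ]
      exact Nat.one_lt_pow (Nat.succ_ne_zero n) hp.one_lt
    have hpQ : IsPGroup p Q := IsPGroup.of_card hQ
    haveI := hpQ.center_nontrivial
    have hdvd : p ∣ Nat.card (Subgroup.center Q) := by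
      obtain ⟨k, hk, hcard⟩ := (Nat.dvd_prime_pow hp).mp
        ((Subgroup.card_subgroup_dvd_card (Subgroup.center Q)).trans (dvd_of_eq hQ))
      rcases Nat.eq_zero_or_pos k with rfl | hkpos
      · exfalso
        have h1 := Finite.one_lt_card (α := ↥(Subgroup.center Q))
        rw [pow_zero] at hcard
        omega
      · rw [hcard]
        exact dvd_pow_self p hkpos.ne'
    obtain ⟨zc, hzc⟩ := exists_prime_orderOf_dvd_card' (G := Subgroup.center Q) p hdvd
    set zb : Q := (zc : Q) with hzbdef
    have hzb_ord : orderOf zb = p := by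
      rw [← hzc]
      exact orderOf_injective (Subgroup.center Q).subtype (Subgroup.subtype_injective _) zc
    have hzb_cen : zb ∈ Subgroup.center Q := zc.2
    set mkM := QuotientGroup.mk' M with hmkMdef
    obtain ⟨z, hz⟩ := QuotientGroup.mk'_surjective M zb
    -- all commutators with z land in M
    have hM : ∀ h : H, ⁅h, z⁆ ∈ M := by
      intro h
      have h1 : mkM ⁅h, z⁆ = 1 := by
        rw [map_commutatorElement, hz]
        exact commutatorElement_eq_one_iff_commute.mpr
          (Subgroup.mem_center_iff.mp hzb_cen (mkM h))
      exact (QuotientGroup.eq_one_iff _).mp h1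
    -- the homomorphism h ↦ ⁅h, z⁆
    obtain ⟨φ, hφ⟩ : ∃ φ : H →* H, ∀ h, φ h = ⁅h, z⁆ := by
      refine ⟨MonoidHom.mk' (fun h => ⁅h, z⁆) ?_, fun h => rfl⟩
      intro a b
      show ⁅a * b, z⁆ = ⁅a, z⁆ * ⁅b, z⁆
      have key : ⁅a * b, z⁆ = a * ⁅b, z⁆ * a⁻¹ * ⁅a, z⁆ := by group
      have h2 : a * ⁅b, z⁆ = ⁅b, z⁆ * a := (hcen _ (hM b) a).symm
      rw [key, h2, mul_inv_cancel_right, hcen _ (hM b) ⁅a, z⁆]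
    set T := φ.range with hTdef
    have hTM : T ≤ M := by
      rintro _ ⟨h, rfl⟩
      rw [hφ]
      exact hM h
    have hTcommH : T ≤ commutator H := by
      rintro _ ⟨h, rfl⟩
      rw [hφ, _root_.commutator_def]
      exact Subgroup.commutator_mem_commutator (Subgroup.mem_top h) (Subgroup.mem_top z)
    haveI hTn : T.Normal := myNormalOfLeCenter T (hTM.trans hMle)
    set Z := Subgroup.comap mkM (Subgroup.zpowers zb) with hZdef
    have hMZ : M ≤ Z := by
      intro m hm
      show mkM m ∈ Subgroup.zpowers zb
      have : mkM m = 1 := (QuotientGroup.eq_one_iff m).mpr hm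
      rw [this]
      exact one_mem _
    have hdecomp : ∀ x ∈ Z, ∃ (m : H) (k : ℤ), m ∈ M ∧ x = m * z ^ k := by
      intro x hx
      obtain ⟨k, hk⟩ := Subgroup.mem_zpowers_iff.mp hx
      refine ⟨x * (z ^ k)⁻¹, k, ?_, by group⟩
      have hmk : mkM (x * (z ^ k)⁻¹) = 1 := by
        rw [map_mul, map_inv, map_zpow, hz, hk]
        simp
      exact (QuotientGroup.eq_one_iff _).mp hmk
    have hZker : Z ≤ φ.ker := by
      intro x hx
      obtain ⟨m, k, hm, rfl⟩ := hdecomp x hx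
      have h1 : φ m = 1 := by
        rw [hφ]
        exact commutatorElement_eq_one_iff_commute.mpr (hcen m hm z)
      have h2 : φ z = 1 := by rw [hφ]; group
      rw [MonoidHom.mem_ker, map_mul, map_zpow, h1, h2]
      simp
    have hZidx : Z.index = p ^ n := by
      have h1 : Z.index = (Subgroup.zpowers zb).index :=
        Subgroup.index_comap_of_surjective _ (QuotientGroup.mk'_surjective M)
      have h2 : (Subgroup.zpowers zb).index * Nat.card (Subgroup.zpowers zb) = Nat.card Q :=
        Subgroup.index_mul_card _
      rw [Nat.card_zpowers, hzb_ord, hQ, pow_succ] at h2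
      rw [h1]
      exact Nat.eq_of_mul_eq_mul_right hp.pos h2
    have hTcard : Nat.card T ∣ p ^ n := by
      have e1 : Nat.card T = Nat.card (H ⧸ φ.ker) :=
        (Nat.card_congr (QuotientGroup.quotientKerEquivRange φ).toEquiv).symm
      rw [e1, ← Subgroup.index_eq_card, ← hZidx]
      exact Subgroup.index_dvd_of_le hZker
    -- pass to the quotient H / T
    set Hb := H ⧸ T with hHbdef
    set π := QuotientGroup.mk' T with hπdef
    have hπs : Function.Surjective π := QuotientGroup.mk'_surjective T
    have hzHb : π z ∈ Subgroup.center Hb := by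
      rw [Subgroup.mem_center_iff]
      intro b
      obtain ⟨y, rfl⟩ := hπs b
      have h1 : (y * z)⁻¹ * (z * y) = z⁻¹ * ⁅y⁻¹, z⁆ * z := by group
      have h2 : z⁻¹ * ⁅y⁻¹, z⁆ * z = ⁅y⁻¹, z⁆ := by
        rw [mul_assoc, hcen _ (hM y⁻¹) z, inv_mul_cancel_left]
      have h3 : (y * z)⁻¹ * (z * y) ∈ T := by
        rw [h1, h2]
        exact ⟨y⁻¹, hφ y⁻¹⟩
      rw [← map_mul, ← map_mul, hπdef, QuotientGroup.mk'_apply, QuotientGroup.mk'_apply]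
      exact QuotientGroup.eq.mpr h3
    have hMHb : ∀ m ∈ M, π m ∈ Subgroup.center Hb := by
      intro m hm
      rw [Subgroup.mem_center_iff]
      intro b
      obtain ⟨y, rfl⟩ := hπs b
      rw [← map_mul, ← map_mul, hcen m hm y]
    set Mb := Z.map π with hMbdef
    have hMbcen : Mb ≤ Subgroup.center Hb := by
      rintro _ ⟨x, hx, rfl⟩
      obtain ⟨m, k, hm, rfl⟩ := hdecomp x hx
      rw [map_mul, map_zpow]
      exact Subgroup.mul_mem _ (hMHb m hm) (Subgroup.zpow_mem _ hzHb k)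
    have hTZ : T ≤ Z := by
      rintro _ ⟨h, rfl⟩
      exact hMZ ((hφ h).symm ▸ hM h)
    have hMbidx : Mb.index = p ^ n := by
      have h1 : Mb.comap π = Z := by
        rw [hMbdef, Subgroup.comap_map_eq, hπdef, QuotientGroup.ker_mk', sup_of_le_left hTZ]
      rw [← Subgroup.index_comap_of_surjective Mb hπs, h1, hZidx]
    have hIH := ih Hb Mb hMbcen hMbidx
    set K := M ⊓ commutator H with hKdef
    have hTK : T ≤ K := le_inf hTM hTcommH
    set ψ := π.comp K.subtype with hψdef
    have hker : ψ.ker = T.subgroupOf K := by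
      ext x
      rw [MonoidHom.mem_ker, hψdef, MonoidHom.comp_apply, Subgroup.mem_subgroupOf]
      show π (K.subtype x) = 1 ↔ _
      rw [hπdef, QuotientGroup.mk'_apply, QuotientGroup.eq_one_iff]
      rfl
    have hcardker : Nat.card ψ.ker = Nat.card T := by
      rw [hker]
      exact Nat.card_congr (Subgroup.subgroupOfEquivOfLe hTK).toEquiv
    have hrange : ψ.range = K.map π := by
      rw [hψdef, MonoidHom.range_comp, Subgroup.range_subtype]
    have hcardquot : Nat.card (↥K ⧸ ψ.ker) = Nat.card (K.map π) := by
      rw [← hrange]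
      exact Nat.card_congr (QuotientGroup.quotientKerEquivRange ψ).toEquiv
    have hmapcomm : (commutator H).map π = commutator Hb := by
      rw [_root_.commutator_def, Subgroup.map_commutator, Subgroup.map_top_of_surjective _ hπs,
        _root_.commutator_def]
    have hmaple : K.map π ≤ Mb ⊓ commutator Hb := by
      rintro _ ⟨x, hx, rfl⟩
      obtain ⟨hx1, hx2⟩ := Subgroup.mem_inf.mp hx
      refine Subgroup.mem_inf.mpr ⟨Subgroup.mem_map_of_mem π (hMZ hx1), ?_⟩
      rw [← hmapcomm]
      exact Subgroup.mem_map_of_mem π hx2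
    have hne : Nat.card ↥(Mb ⊓ commutator Hb) ≠ 0 := by
      intro h0
      rw [h0] at hIH
      exact pow_ne_zero _ hp.pos.ne' (Nat.eq_zero_of_zero_dvd hIH)
    haveI : Finite ↥(Mb ⊓ commutator Hb) := Nat.finite_of_card_ne_zero hne
    have hdvd1 : Nat.card (K.map π) ∣ p ^ (n * (n - 1) / 2) :=
      (Subgroup.card_dvd_of_le hmaple).trans hIH
    have hKcard : Nat.card ↥K = Nat.card (K.map π) * Nat.card T := by
      have := Subgroup.card_eq_card_quotient_mul_card_subgroup (ψ.ker)
      rwa [hcardquot, hcardker] at this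
    calc Nat.card ↥(M ⊓ commutator H) = Nat.card (K.map π) * Nat.card T := hKcard
      _ ∣ p ^ (n * (n - 1) / 2) * p ^ n := mul_dvd_mul hdvd1 hTcard
      _ = p ^ ((n + 1) * ((n + 1) - 1) / 2) := by
          rw [← pow_add, exp_step]

theorem card_schur_multiplier_dvd_of_p_group (p n : ℕ) (hp : p.Prime)
    (G : Type*) [Group G] (hG : Nat.card G = p ^ n) :
    Nat.card (SchurMultiplier G) ∣ p ^ (n * (n - 1) / 2) := by
  set F := FreeGroup G with hFdef
  set pr := presentation G with hprdef
  set R := pr.ker with hRdef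
  set C := ⁅(⊤ : Subgroup F), R⁆ with hCdef
  set K₀ := R ⊓ commutator F with hK₀def
  have hprs : Function.Surjective pr := fun g =>
    ⟨FreeGroup.of g, by rw [hprdef, presentation, FreeGroup.lift_apply_of]; rfl⟩
  have hCR : C ≤ R := Subgroup.commutator_le_right ⊤ R
  have hCcomm : C ≤ commutator F := by
    rw [_root_.commutator_def]
    exact Subgroup.commutator_mono le_rfl le_top
  have hCK₀ : C ≤ K₀ := le_inf hCR hCcomm
  set κ := QuotientGroup.mk' C with hκdef
  have hκs : Function.Surjective κ := QuotientGroup.mk'_surjective C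
  set H := F ⧸ C with hHdef
  set M := R.map κ with hMdef
  -- Step A : card of the Schur multiplier equals card of K₀.map κ
  set ψ₀ := κ.comp K₀.subtype with hψ₀def
  have hker₀ : ψ₀.ker = C.subgroupOf K₀ := by
    ext x
    rw [MonoidHom.mem_ker, hψ₀def, MonoidHom.comp_apply, Subgroup.mem_subgroupOf]
    show κ (K₀.subtype x) = 1 ↔ _
    rw [hκdef, QuotientGroup.mk'_apply, QuotientGroup.eq_one_iff]
    rfl
  have hrange₀ : ψ₀.range = K₀.map κ := by
    rw [hψ₀def, MonoidHom.range_comp, Subgroup.range_subtype]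
  have hA : Nat.card (SchurMultiplier G) = Nat.card (K₀.map κ) := by
    have e1 : Nat.card (SchurMultiplier G) = Nat.card (↥K₀ ⧸ C.subgroupOf K₀) := rfl
    rw [e1, ← hker₀, ← hrange₀]
    exact Nat.card_congr (QuotientGroup.quotientKerEquivRange ψ₀).toEquiv
  -- Step B : K₀.map κ = M ⊓ commutator H
  have hmapcomm : (commutator F).map κ = commutator H := by
    rw [_root_.commutator_def, Subgroup.map_commutator, Subgroup.map_top_of_surjective _ hκs,
      _root_.commutator_def]
  have hB : K₀.map κ = M ⊓ commutator H := by
    apply le_antisymm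
    · exact le_inf (Subgroup.map_mono inf_le_left)
        ((Subgroup.map_mono inf_le_right).trans (le_of_eq hmapcomm))
    · rintro x hx
      obtain ⟨hx1, hx2⟩ := Subgroup.mem_inf.mp hx
      obtain ⟨r, hr, rfl⟩ := hx1
      rw [← hmapcomm] at hx2
      obtain ⟨c, hc, hce⟩ := hx2
      have hmem : c⁻¹ * r ∈ C := by
        have : κ (c⁻¹ * r) = 1 := by rw [map_mul, map_inv, hce]; simp
        rw [hκdef, QuotientGroup.mk'_apply] at this
        exact (QuotientGroup.eq_one_iff _).mp this
      have hrcomm : r ∈ commutator F := by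
        have : r = c * (c⁻¹ * r) := by group
        rw [this]
        exact Subgroup.mul_mem _ hc (hCcomm hmem)
      exact Subgroup.mem_map_of_mem κ (Subgroup.mem_inf.mpr ⟨hr, hrcomm⟩)
  -- Step C : M is central in H
  have hC : M ≤ Subgroup.center H := by
    rintro _ ⟨r, hr, rfl⟩
    rw [Subgroup.mem_center_iff]
    intro b
    obtain ⟨y, rfl⟩ := hκs b
    have h1 : (y * r)⁻¹ * (r * y) = ⁅r⁻¹, y⁻¹⁆ := by
      rw [commutatorElement_def]
      group
    have h2 : (y * r)⁻¹ * (r * y) ∈ C := by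
      rw [h1, ← commutatorElement_inv]
      exact Subgroup.inv_mem _
        (Subgroup.commutator_mem_commutator (Subgroup.mem_top y⁻¹) (Subgroup.inv_mem _ hr))
    rw [← map_mul, ← map_mul, hκdef, QuotientGroup.mk'_apply, QuotientGroup.mk'_apply]
    exact QuotientGroup.eq.mpr h2
  -- Step D : M has index p ^ n
  have hD : M.index = p ^ n := by
    have h1 : M.comap κ = R := by
      rw [hMdef, Subgroup.comap_map_eq, hκdef, QuotientGroup.ker_mk', sup_of_le_left hCR]
    have h2 : R.index = Nat.card G := by
      rw [Subgroup.index_eq_card]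
      exact Nat.card_congr (QuotientGroup.quotientKerEquivOfSurjective pr hprs).toEquiv
    rw [← Subgroup.index_comap_of_surjective M hκs, h1, h2, hG]
  rw [hA, hB]
  exact green_aux p hp n H M hC hD
end

section
/- Let p be a prime and G an abelian group of order pⁿ with |M(G)| = p^{n(n−1)/2}. Then G is elementary abelian. -/
namespace SMaux

open scoped commutatorElement

variable {G : Type*} [CommGroup G]

abbrev Rg (G : Type*) [CommGroup G] : Subgroup (FreeGroup G) := (presentation G).ker
abbrev Ng (G : Type*) [CommGroup G] : Subgroup (FreeGroup G) :=
  ⁅(⊤ : Subgroup (FreeGroup G)), Rg G⁆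
abbrev Kg (G : Type*) [CommGroup G] : Subgroup (FreeGroup G) :=
  Rg G ⊓ commutator (FreeGroup G)

lemma pres_of (g : G) : presentation G (FreeGroup.of g) = g := FreeGroup.lift_apply_of

lemma commElt_mem_Rg (a b : FreeGroup G) : ⁅a, b⁆ ∈ Rg G := by
  simp only [Rg, MonoidHom.mem_ker, map_commutatorElement]
  exact commutatorElement_eq_one_iff_mul_comm.mpr (mul_comm _ _)

lemma commElt_mem_Kg (a b : FreeGroup G) : ⁅a, b⁆ ∈ Kg G :=
  Subgroup.mem_inf.mpr ⟨commElt_mem_Rg a b,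
    Subgroup.commutator_mem_commutator (Subgroup.mem_top a) (Subgroup.mem_top b)⟩

/-- `κ a b` is the class of `⁅a,b⁆` in the Schur multiplier. -/
def kap (a b : FreeGroup G) : SchurMultiplier G :=
  QuotientGroup.mk ⟨⁅a, b⁆, commElt_mem_Kg a b⟩

lemma mk_eq_mk {w₁ w₂ : Kg G} (h : (↑w₁)⁻¹ * (↑w₂ : FreeGroup G) ∈ Ng G) :
    (QuotientGroup.mk w₁ : SchurMultiplier G) = QuotientGroup.mk w₂ := by
  apply QuotientGroup.eq.mpr
  rw [Subgroup.mem_subgroupOf]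
  exact h

lemma kap_mul_left (a b c : FreeGroup G) : kap (a * b) c = kap a c * kap b c := by
  show _ = (QuotientGroup.mk _ * QuotientGroup.mk _ : SchurMultiplier G)
  show (QuotientGroup.mk (⟨_, commElt_mem_Kg (a * b) c⟩ : Kg G) : SchurMultiplier G) =
    QuotientGroup.mk ((⟨_, commElt_mem_Kg a c⟩ : Kg G) * ⟨_, commElt_mem_Kg b c⟩)
  apply mk_eq_mk
  have h1 : ⁅a, ⁅b, c⁆⁻¹⁆ ∈ Ng G :=
    Subgroup.commutator_mem_commutator (Subgroup.mem_top _) (inv_mem (commElt_mem_Rg b c))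
  have h2 : ⁅⁅a, c⁆⁻¹, ⁅b, c⁆⁻¹⁆ ∈ Ng G :=
    Subgroup.commutator_mem_commutator (Subgroup.mem_top _) (inv_mem (commElt_mem_Rg b c))
  have h3 : ⁅a, c⁆⁻¹ * ⁅a, ⁅b, c⁆⁻¹⁆ * ⁅a, c⁆ ∈ Ng G := by
    have := (Subgroup.commutator_normal _ _).conj_mem _ h1 ⁅a, c⁆⁻¹
    simpa using this
  have key : (⁅a * b, c⁆)⁻¹ * (⁅a, c⁆ * ⁅b, c⁆) =
      (⁅a, c⁆⁻¹ * ⁅a, ⁅b, c⁆⁻¹⁆ * ⁅a, c⁆) * ⁅⁅a, c⁆⁻¹, ⁅b, c⁆⁻¹⁆ := by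
    simp only [commutatorElement_def]; group
  show (⁅a * b, c⁆)⁻¹ * (⁅a, c⁆ * ⁅b, c⁆) ∈ Ng G
  rw [key]
  exact mul_mem h3 h2

lemma kap_anti (a b : FreeGroup G) : kap a b = (kap b a)⁻¹ := by
  have h : (⟨⁅b, a⁆, commElt_mem_Kg b a⟩ : Kg G)⁻¹ = ⟨⁅a, b⁆, commElt_mem_Kg a b⟩ :=
    Subtype.ext (by simp [commutatorElement_inv])
  rw [kap, kap, ← h]; rfl

lemma m_comm (x y : SchurMultiplier G) : x * y = y * x := by
  obtain ⟨w₁, rfl⟩ := QuotientGroup.mk_surjective x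
  obtain ⟨w₂, rfl⟩ := QuotientGroup.mk_surjective y
  show (QuotientGroup.mk (w₁ * w₂) : SchurMultiplier G) = QuotientGroup.mk (w₂ * w₁)
  apply mk_eq_mk
  have key : ((↑(w₁ * w₂) : FreeGroup G))⁻¹ * ↑(w₂ * w₁) = ⁅(↑w₂ : FreeGroup G)⁻¹, (↑w₁ : FreeGroup G)⁻¹⁆ := by
    simp only [Subgroup.coe_mul, commutatorElement_def]; group
  rw [key]
  exact Subgroup.commutator_mem_commutator (Subgroup.mem_top _)
    (inv_mem (Subgroup.mem_inf.mp w₁.2).1)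

lemma kap_congr_left {a a' : FreeGroup G} (b : FreeGroup G)
    (h : presentation G a = presentation G a') : kap a b = kap a' b := by
  set r : FreeGroup G := a'⁻¹ * a with hr_def
  have hr : r ∈ Rg G := by
    simp only [Rg, MonoidHom.mem_ker, hr_def, map_mul, map_inv, h]
    group
  have ha : a = a' * r := by rw [hr_def]; group
  apply mk_eq_mk
  show (⁅a, b⁆)⁻¹ * ⁅a', b⁆ ∈ Ng G
  have hm : ⁅r, b⁻¹⁆ ∈ Ng G := by
    have h1 : ⁅b⁻¹, r⁆ ∈ Ng G :=
      Subgroup.commutator_mem_commutator (Subgroup.mem_top _) hr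
    have h2 := inv_mem h1
    rwa [commutatorElement_inv] at h2
  have key : (⁅a' * r, b⁆)⁻¹ * ⁅a', b⁆ = (b * a') * ⁅r, b⁻¹⁆ * (b * a')⁻¹ := by
    simp only [commutatorElement_def]; group
  rw [ha, key]
  exact (Subgroup.commutator_normal _ _).conj_mem _ hm (b * a')

lemma kap_congr_right (a : FreeGroup G) {b b' : FreeGroup G}
    (h : presentation G b = presentation G b') : kap a b = kap a b' := by
  rw [kap_anti, kap_congr_left a h, ← kap_anti]

lemma kap_mul_right (a b c : FreeGroup G) : kap a (b * c) = kap a b * kap a c := by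
  rw [kap_anti, kap_mul_left, mul_inv_rev, ← kap_anti, ← kap_anti, m_comm]

/-- The map `b ↦ κ a b` as a monoid hom. -/
noncomputable def kapHomL (a : FreeGroup G) : FreeGroup G →* SchurMultiplier G :=
  MonoidHom.mk' (fun c => kap a c) (fun b c => kap_mul_right a b c)

/-- The descended pairing on `G`. -/
def cbar (g h : G) : SchurMultiplier G := kap (FreeGroup.of g) (FreeGroup.of h)

lemma kap_eq_cbar (a b : FreeGroup G) :
    kap a b = cbar (presentation G a) (presentation G b) := by
  rw [cbar]
  rw [kap_congr_left b (a' := FreeGroup.of (presentation G a)) (by rw [pres_of])]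
  rw [kap_congr_right _ (b' := FreeGroup.of (presentation G b)) (by rw [pres_of])]

lemma cbar_mul_left (g g' h : G) : cbar (g * g') h = cbar g h * cbar g' h := by
  rw [cbar, cbar, cbar, ← kap_mul_left]
  exact kap_congr_left _ (by simp [pres_of, map_mul])

lemma cbar_anti (g h : G) : cbar g h = (cbar h g)⁻¹ := kap_anti _ _

lemma cbar_mul_right (g h h' : G) : cbar g (h * h') = cbar g h * cbar g h' := by
  rw [cbar_anti, cbar_mul_left, mul_inv_rev, ← cbar_anti, ← cbar_anti, m_comm]

noncomputable def cbarHomR (h : G) : G →* SchurMultiplier G :=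
  MonoidHom.mk' (fun g => cbar g h) (fun g g' => cbar_mul_left g g' h)

noncomputable def cbarHomL (g : G) : G →* SchurMultiplier G :=
  MonoidHom.mk' (fun h => cbar g h) (fun h h' => cbar_mul_right g h h')

lemma cbar_self (g : G) : cbar g g = 1 := by
  rw [cbar, kap]
  have : (⟨⁅FreeGroup.of g, FreeGroup.of g⁆, commElt_mem_Kg _ _⟩ : Kg G) = 1 :=
    Subtype.ext (by simp)
  rw [this, QuotientGroup.mk_one]; rfl

/-- Generation: any subgroup of the Schur multiplier containing all `cbar g h` is everything. -/
theorem mem_of_cbar_mem {H : Subgroup (SchurMultiplier G)}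
    (hH : ∀ g h : G, cbar g h ∈ H) : ∀ z : SchurMultiplier G, z ∈ H := by
  have step1 : ∀ a b : FreeGroup G, kap a b ∈ H := fun a b => by
    rw [kap_eq_cbar]; exact hH _ _
  let P : Subgroup (FreeGroup G) :=
    Subgroup.map (Kg G).subtype
      (H.comap (QuotientGroup.mk' ((Ng G).subgroupOf (Kg G))))
  have hle : commutator (FreeGroup G) ≤ P := by
    rw [commutator_def]
    refine Subgroup.commutator_le.mpr fun a _ b _ => ?_
    exact ⟨⟨⁅a, b⁆, commElt_mem_Kg a b⟩, step1 a b, rfl⟩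
  intro z
  obtain ⟨w, rfl⟩ := QuotientGroup.mk_surjective z
  have hw : (w : FreeGroup G) ∈ P := hle (Subgroup.mem_inf.mp w.2).2
  obtain ⟨y, hy, hyw⟩ := hw
  have : y = w := Subtype.ext hyw
  rwa [this] at hy

@[simp] lemma cbarHomL_apply (g h : G) : cbarHomL g h = cbar g h := rfl
@[simp] lemma cbarHomR_apply (g h : G) : cbarHomR h g = cbar g h := rfl

end SMaux


theorem card_dvd_of_gen {H : Type*} [CommGroup H] {ι : Type*} [Fintype ι]
    (x : ι → H) (d : ι → ℕ) (hx : ∀ i, x i ^ d i = 1)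
    (hgen : ∀ y : H, y ∈ Subgroup.closure (Set.range x)) :
    Nat.card H ∣ ∏ i, d i := by
  classical
  have hf : ∀ i, (zmultiplesHom (Additive H) (Additive.ofMul (x i))) (d i : ℤ) = 0 := by
    intro i
    show (d i : ℤ) • Additive.ofMul (x i) = 0
    rw [natCast_zsmul, ← ofMul_pow, hx i, ofMul_one]
  let f : ∀ i, ZMod (d i) →+ Additive H := fun i =>
    ZMod.lift (d i) ⟨zmultiplesHom (Additive H) (Additive.ofMul (x i)), hf i⟩
  let φ : Multiplicative (∀ i, ZMod (d i)) →* H :=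
    MonoidHom.mk' (fun v => ∏ i, Additive.toMul (f i (Multiplicative.toAdd v i)))
      (by
        intro v w
        rw [← Finset.prod_mul_distrib]
        refine Finset.prod_congr rfl fun i _ => ?_
        have : Multiplicative.toAdd (v * w) i = Multiplicative.toAdd v i + Multiplicative.toAdd w i := rfl
        rw [this, map_add]
        rfl)
  have hrange : ∀ i, x i ∈ φ.range := by
    intro i
    refine ⟨Multiplicative.ofAdd (Pi.single i 1), ?_⟩
    show (∏ j, Additive.toMul (f j ((Pi.single (M := fun j => ZMod (d j)) i (1 : ZMod (d i))) j))) = x i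
    rw [Finset.prod_eq_single i]
    · rw [Pi.single_eq_same]
      have h2 : ((1 : ℤ) : ZMod (d i)) = 1 := by push_cast; rfl
      rw [← h2, ZMod.lift_coe]
      show Additive.toMul ((1 : ℤ) • Additive.ofMul (x i)) = x i
      simp
    · intro j _ hj
      rw [Pi.single_eq_of_ne hj]
      simp
    · intro h; exact absurd (Finset.mem_univ i) h
  have hsurj : Function.Surjective φ := by
    intro y
    have hle : Subgroup.closure (Set.range x) ≤ φ.range :=
      (Subgroup.closure_le _).mpr (by rintro _ ⟨i, rfl⟩; exact hrange i)
    exact hle (hgen y)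
  have h1 : Nat.card H ∣ Nat.card (Multiplicative (∀ i, ZMod (d i))) :=
    Subgroup.card_dvd_of_surjective φ hsurj
  have h2 : Nat.card (Multiplicative (∀ i, ZMod (d i))) = ∏ i, d i := by
    rw [Nat.card_congr (Multiplicative.toAdd (α := ∀ i, ZMod (d i))), Nat.card_pi]
    exact Finset.prod_congr rfl fun i _ => Nat.card_zmod _
  rwa [h2] at h1


theorem min_le_mul (a b : ℕ) : min a b ≤ a * b := by
  rcases Nat.eq_zero_or_pos b with hb | hb
  · simp [hb]
  · calc min a b ≤ a := min_le_left _ _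
    _ ≤ a * b := Nat.le_mul_of_pos_right a hb

theorem comb {k n : ℕ} (e : Fin k → ℕ) (hsum : ∑ i, e i = n) (i0 : Fin k) (hi0 : 2 ≤ e i0) :
    2 * (∑ q ∈ Finset.univ.filter (fun q : Fin k × Fin k => q.1 < q.2),
        min (e q.1) (e q.2)) + (n + 2) ≤ n * n := by
  classical
  set s : Finset (Fin k × Fin k) := Finset.univ.filter (fun q => q.1 < q.2) with hs
  set s' : Finset (Fin k × Fin k) :=
    Finset.univ.filter (fun q => ¬ q.1 = q.2 ∧ ¬ q.1 < q.2) with hs'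
  set sd : Finset (Fin k × Fin k) := Finset.univ.filter (fun q => q.1 = q.2) with hsd
  -- swap bijection
  have hswap : ∑ q ∈ s, min (e q.1) (e q.2) = ∑ q ∈ s', min (e q.1) (e q.2) := by
    refine Finset.sum_nbij' (fun q => Prod.swap q) (fun q => Prod.swap q) ?_ ?_ ?_ ?_ ?_
    · intro a ha
      simp only [hs, Finset.mem_filter, Finset.mem_univ, true_and] at ha
      simp only [hs', Finset.mem_filter, Finset.mem_univ, true_and, Prod.fst_swap, Prod.snd_swap]
      exact ⟨ne_of_gt ha, not_lt_of_gt ha⟩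
    · intro a ha
      simp only [hs', Finset.mem_filter, Finset.mem_univ, true_and] at ha
      simp only [hs, Finset.mem_filter, Finset.mem_univ, true_and, Prod.fst_swap, Prod.snd_swap]
      rcases lt_trichotomy a.2 a.1 with h | h | h
      · exact h
      · exact absurd h.symm ha.1
      · exact absurd h ha.2
    · intro a _; simp
    · intro a _; simp
    · intro a _; simp [min_comm]
  -- bounds by products
  have hA : ∑ q ∈ s, min (e q.1) (e q.2) ≤ ∑ q ∈ s, e q.1 * e q.2 :=
    Finset.sum_le_sum fun q _ => min_le_mul _ _
  have hA' : ∑ q ∈ s', min (e q.1) (e q.2) ≤ ∑ q ∈ s', e q.1 * e q.2 :=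
    Finset.sum_le_sum fun q _ => min_le_mul _ _
  -- diagonal
  have hdiag : ∑ q ∈ sd, e q.1 * e q.2 = ∑ i, e i * e i := by
    refine Finset.sum_nbij' (fun q => q.1) (fun i => (i, i)) ?_ ?_ ?_ ?_ ?_
    · intro a _; exact Finset.mem_univ _
    · intro a _; simp [hsd]
    · intro a ha
      simp only [hsd, Finset.mem_filter, Finset.mem_univ, true_and] at ha
      exact Prod.ext rfl ha
    · intro a _; rfl
    · intro a ha
      simp only [hsd, Finset.mem_filter, Finset.mem_univ, true_and] at ha
      rw [← ha]
  -- partition of the full sum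
  have htotal : ∑ q ∈ sd, e q.1 * e q.2 + (∑ q ∈ s, e q.1 * e q.2
      + ∑ q ∈ s', e q.1 * e q.2) = n * n := by
    have h1 : ∑ q ∈ (Finset.univ : Finset (Fin k × Fin k)), e q.1 * e q.2 = n * n := by
      rw [← Finset.univ_product_univ, Finset.sum_product, ← Finset.sum_mul_sum, hsum]
    have h2 := Finset.sum_filter_add_sum_filter_not (Finset.univ : Finset (Fin k × Fin k))
      (fun q => q.1 = q.2) (fun q => e q.1 * e q.2)
    have h3 := Finset.sum_filter_add_sum_filter_not
      (Finset.univ.filter (fun q : Fin k × Fin k => ¬ q.1 = q.2))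
      (fun q => q.1 < q.2) (fun q => e q.1 * e q.2)
    have h4 : (Finset.univ.filter (fun q : Fin k × Fin k => ¬ q.1 = q.2)).filter
        (fun q => q.1 < q.2) = s := by
      rw [Finset.filter_filter, hs]
      apply Finset.filter_congr
      intro q _
      constructor
      · exact fun h => h.2
      · exact fun h => ⟨ne_of_lt h, h⟩
    have h5 : (Finset.univ.filter (fun q : Fin k × Fin k => ¬ q.1 = q.2)).filter
        (fun q => ¬ q.1 < q.2) = s' := by
      rw [Finset.filter_filter, hs']
    rw [h4, h5] at h3
    rw [← h1, ← h2, ← h3, hsd]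
  -- square sum lower bound
  have hsq : n + 2 ≤ ∑ i, e i * e i := by
    have h1 : ∑ i, (e i + if i = i0 then 2 else 0) = n + 2 := by
      rw [Finset.sum_add_distrib, hsum, Finset.sum_ite_eq' Finset.univ i0 (fun _ => 2)]
      simp
    rw [← h1]
    refine Finset.sum_le_sum fun i _ => ?_
    by_cases h : i = i0
    · subst h
      rw [if_pos rfl]
      have h2 : 2 * e i ≤ e i * e i := Nat.mul_le_mul_right _ hi0
      omega
    · simp only [h, if_false, add_zero]
      rcases Nat.eq_zero_or_pos (e i) with h0 | h0
      · simp [h0]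
      · exact Nat.le_mul_of_pos_right _ h0
  calc 2 * (∑ q ∈ s, min (e q.1) (e q.2)) + (n + 2)
      = (∑ q ∈ s, min (e q.1) (e q.2)) + (∑ q ∈ s', min (e q.1) (e q.2)) + (n + 2) := by
        rw [← hswap]; ring
    _ ≤ (∑ q ∈ s, e q.1 * e q.2) + (∑ q ∈ s', e q.1 * e q.2) + ∑ i, e i * e i :=
        add_le_add (add_le_add hA hA') hsq
    _ ≤ n * n := by
        rw [← htotal, ← hdiag]
        exact le_of_eq (by ring)


theorem elementary_abelian_of_max_schur_multiplier (p n : ℕ) (hp : p.Prime)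
    (G : Type*) [CommGroup G] (hG : Nat.card G = p ^ n)
    (hM : Nat.card (SchurMultiplier G) = p ^ (n * (n - 1) / 2)) :
    ∀ g : G, g ^ p = 1 := by
  intro g₀
  by_contra hg₀
  have hfin : Finite G := Nat.finite_of_card_ne_zero (by rw [hG]; exact (pow_pos hp.pos n).ne')
  haveI : Finite (Additive G) := hfin
  obtain ⟨ι, hι, pr, hpr, e0, ⟨ε0⟩⟩ := AddCommGroup.equiv_directSum_zmod_of_finite (Additive G)
  haveI := hι
  classical
  let ε1 : Additive G ≃+ ∀ i, ZMod (pr i ^ e0 i) := ε0.trans (DirectSum.addEquivProd _)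
  haveI hNZ : ∀ i, NeZero (pr i ^ e0 i) := fun i => ⟨(pow_pos (hpr i).pos _).ne'⟩
  have hm : ∏ i, pr i ^ e0 i = p ^ n := by
    rw [← hG]
    calc ∏ i, pr i ^ e0 i = ∏ i, Nat.card (ZMod (pr i ^ e0 i)) :=
          Finset.prod_congr rfl fun i _ => (Nat.card_zmod _).symm
      _ = Nat.card (∀ i, ZMod (pr i ^ e0 i)) := Nat.card_pi.symm
      _ = Nat.card (Additive G) := (Nat.card_congr ε1.toEquiv).symm
      _ = Nat.card G := Nat.card_congr Additive.toMul
  have hmp : ∀ i, pr i ^ e0 i = p ^ e0 i := by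
    intro i
    by_cases h0 : e0 i = 0
    · rw [h0, pow_zero, pow_zero]
    · have hdvd : pr i ∣ p ^ n := by
        rw [← hm]
        exact dvd_trans (dvd_pow_self (pr i) h0) (Finset.dvd_prod_of_mem _ (Finset.mem_univ i))
      have hpe : pr i = p := (Nat.prime_dvd_prime_iff_eq (hpr i) hp).mp ((hpr i).dvd_of_dvd_pow hdvd)
      rw [hpe]
  have hsum : ∑ i, e0 i = n := by
    refine Nat.pow_right_injective hp.two_le ?_
    show p ^ (∑ i, e0 i) = p ^ n
    rw [← Finset.prod_pow_eq_pow_sum, ← hm]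
    exact Finset.prod_congr rfl fun i _ => (hmp i).symm
  set x : ι → G := fun i => Additive.toMul (ε1.symm (Pi.single i 1)) with hx_def
  have hxord : ∀ i, x i ^ (pr i ^ e0 i) = 1 := by
    intro i
    apply Additive.ofMul.injective
    rw [ofMul_pow, ofMul_one, hx_def]
    show (pr i ^ e0 i) • Additive.ofMul (Additive.toMul (ε1.symm (Pi.single i 1))) = 0
    rw [ofMul_toMul, ← map_nsmul]
    have hz : (pr i ^ e0 i) • (Pi.single i (1 : ZMod (pr i ^ e0 i)) : ∀ j, ZMod (pr j ^ e0 j)) = 0 := by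
      funext j
      by_cases hj : j = i
      · subst hj
        simp only [Pi.smul_apply, Pi.single_eq_same, Pi.zero_apply, nsmul_eq_mul, mul_one,
          Nat.cast_pow]
        rw [← Nat.cast_pow, ZMod.natCast_self]
      · simp [Pi.smul_apply, Pi.single_eq_of_ne hj]
    rw [hz, map_zero]
  have hxgen : ∀ g : G, g ∈ Subgroup.closure (Set.range x) := by
    intro g
    set v : ∀ i, ZMod (pr i ^ e0 i) := ε1 (Additive.ofMul g) with hv_def
    have hsingle : ∀ j, (v j).val • (Pi.single j (1 : ZMod (pr j ^ e0 j)) : ∀ l, ZMod (pr l ^ e0 l))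
        = Pi.single j (v j) := by
      intro j
      funext l
      by_cases hl : l = j
      · subst hl
        simp only [Pi.smul_apply, Pi.single_eq_same, nsmul_eq_mul, mul_one]
        exact ZMod.natCast_rightInverse (v l)
      · simp [Pi.smul_apply, Pi.single_eq_of_ne hl]
    have hrep : g = ∏ j, x j ^ (v j).val := by
      apply Additive.ofMul.injective
      rw [ofMul_prod]
      have h1 : ∀ j, Additive.ofMul (x j ^ (v j).val) = (v j).val • ε1.symm (Pi.single j 1) := by
        intro j
        rw [ofMul_pow, hx_def]
        rw [ofMul_toMul]
      rw [Finset.sum_congr rfl fun j _ => h1 j]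
      apply ε1.injective
      rw [map_sum]
      have h2 : ∀ j, ε1 ((v j).val • ε1.symm (Pi.single j (1 : ZMod (pr j ^ e0 j)))) =
          Pi.single j (v j) := by
        intro j
        rw [map_nsmul, ε1.apply_symm_apply, hsingle j]
      rw [Finset.sum_congr rfl fun j _ => h2 j]
      rw [Finset.univ_sum_single v]
    rw [hrep]
    exact Subgroup.prod_mem _ fun j _ => Subgroup.pow_mem _ (Subgroup.subset_closure (Set.mem_range_self j)) _
  have hex : ∃ i, 2 ≤ e0 i := by
    by_contra hcon
    push_neg at hcon
    apply hg₀
    have hdvd : ∀ i, (pr i ^ e0 i) ∣ p := by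
      intro i
      rw [hmp i]
      calc p ^ e0 i ∣ p ^ 1 := pow_dvd_pow p (by have := hcon i; omega)
        _ = p := pow_one p
    have hz : ε1 (Additive.ofMul (g₀ ^ p)) = 0 := by
      rw [ofMul_pow, map_nsmul]
      funext i
      rw [Pi.smul_apply, nsmul_eq_mul]
      have hc : ((p : ℕ) : ZMod (pr i ^ e0 i)) = 0 :=
        (ZMod.natCast_eq_zero_iff _ _).mpr (hdvd i)
      rw [hc, zero_mul, Pi.zero_apply]
    apply Additive.ofMul.injective
    rw [ofMul_one]
    apply ε1.injective
    rw [map_zero]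
    exact hz
  obtain ⟨i0, hi0⟩ := hex
  set k := Fintype.card ι with hk
  set σ : ι ≃ Fin k := Fintype.equivFin ι with hσ
  set x' : Fin k → G := x ∘ σ.symm with hx'
  set e' : Fin k → ℕ := e0 ∘ σ.symm with he'
  have hxord' : ∀ i, x' i ^ (p ^ e' i) = 1 := by
    intro i
    have h := hxord (σ.symm i)
    rwa [hmp (σ.symm i)] at h
  have hxgen' : ∀ g : G, g ∈ Subgroup.closure (Set.range x') := by
    intro g
    rw [show Set.range x' = Set.range x from σ.symm.surjective.range_comp x]
    exact hxgen g
  have hsum' : ∑ i, e' i = n := by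
    show ∑ i, e0 (σ.symm i) = n
    rw [Equiv.sum_comp σ.symm e0]
    exact hsum
  have hi0' : 2 ≤ e' (σ i0) := by
    show 2 ≤ e0 (σ.symm (σ i0))
    rw [Equiv.symm_apply_apply]
    exact hi0
  letI : CommGroup (SchurMultiplier G) :=
    { (inferInstance : Group (SchurMultiplier G)) with mul_comm := SMaux.m_comm }
  set s : Finset (Fin k × Fin k) := Finset.univ.filter (fun q => q.1 < q.2) with hs
  have hyord : ∀ q : {q // q ∈ s},
      SMaux.cbar (x' q.1.1) (x' q.1.2) ^ (p ^ min (e' q.1.1) (e' q.1.2)) = 1 := by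
    intro q
    rcases le_total (e' q.1.1) (e' q.1.2) with hle | hle
    · rw [min_eq_left hle]
      show SMaux.cbarHomR (x' q.1.2) (x' q.1.1) ^ (p ^ e' q.1.1) = 1
      rw [← map_pow, hxord', map_one]
    · rw [min_eq_right hle]
      show SMaux.cbarHomL (x' q.1.1) (x' q.1.2) ^ (p ^ e' q.1.2) = 1
      rw [← map_pow, hxord', map_one]
  set Hgen : Subgroup (SchurMultiplier G) := Subgroup.closure
      (Set.range (fun q : {q // q ∈ s} => SMaux.cbar (x' q.1.1) (x' q.1.2))) with hHgen
  have hygen : ∀ z : SchurMultiplier G, z ∈ Hgen := by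
    apply SMaux.mem_of_cbar_mem
    intro g h
    have claimA : ∀ i : Fin k, ∀ h : G, SMaux.cbar (x' i) h ∈ Hgen := by
      intro i h
      have hB : Subgroup.closure (Set.range x') ≤
          Subgroup.comap (SMaux.cbarHomL (x' i)) Hgen := by
        refine (Subgroup.closure_le _).mpr ?_
        rintro _ ⟨j, rfl⟩
        simp only [SetLike.mem_coe, Subgroup.mem_comap, SMaux.cbarHomL_apply]
        rcases lt_trichotomy i j with hij | rfl | hij
        · exact Subgroup.subset_closure ⟨⟨(i, j), by simp [hs, hij]⟩, rfl⟩
        · rw [SMaux.cbar_self]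
          exact one_mem _
        · rw [SMaux.cbar_anti]
          exact inv_mem (Subgroup.subset_closure ⟨⟨(j, i), by simp [hs, hij]⟩, rfl⟩)
      have hmem := hB (hxgen' h)
      rwa [Subgroup.mem_comap, SMaux.cbarHomL_apply] at hmem
    have hC : Subgroup.closure (Set.range x') ≤
        Subgroup.comap (SMaux.cbarHomR h) Hgen := by
      refine (Subgroup.closure_le _).mpr ?_
      rintro _ ⟨i, rfl⟩
      simp only [SetLike.mem_coe, Subgroup.mem_comap, SMaux.cbarHomR_apply]
      exact claimA i h
    have hmem := hC (hxgen' g)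
    rwa [Subgroup.mem_comap, SMaux.cbarHomR_apply] at hmem
  have hdvd2 := card_dvd_of_gen (fun q : {q // q ∈ s} => SMaux.cbar (x' q.1.1) (x' q.1.2))
    (fun q => p ^ min (e' q.1.1) (e' q.1.2)) hyord hygen
  have hprod : (∏ q : {q // q ∈ s}, p ^ min (e' q.1.1) (e' q.1.2))
      = p ^ (∑ q ∈ s, min (e' q.1) (e' q.2)) := by
    rw [← Finset.prod_pow_eq_pow_sum]
    exact Finset.prod_coe_sort s (fun q => p ^ min (e' q.1) (e' q.2))
  rw [hM, hprod] at hdvd2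
  have hle := (Nat.pow_dvd_pow_iff_le_right hp.one_lt).mp hdvd2
  have hcomb := comb e' hsum' (σ i0) hi0'
  rw [← hs] at hcomb
  have heven : 2 ∣ n * (n - 1) := by
    rcases Nat.even_or_odd n with h | h
    · exact Dvd.dvd.mul_right h.two_dvd _
    · have h2 : Even (n - 1) := Nat.Odd.sub_odd h odd_one
      exact Dvd.dvd.mul_left h2.two_dvd _
  have h2T : n * (n - 1) ≤ 2 * (∑ q ∈ s, min (e' q.1) (e' q.2)) := by
    calc n * (n - 1) = 2 * (n * (n - 1) / 2) := (Nat.mul_div_cancel' heven).symm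
      _ ≤ 2 * (∑ q ∈ s, min (e' q.1) (e' q.2)) := Nat.mul_le_mul_left 2 hle
  have hn2 : 2 ≤ n := by
    calc 2 ≤ e' (σ i0) := hi0'
      _ ≤ ∑ i, e' i := Finset.single_le_sum (fun i _ => Nat.zero_le _) (Finset.mem_univ _)
      _ = n := hsum'
  have hnn : n * (n - 1) + n = n * n := by
    have h1 : n - 1 + 1 = n := Nat.succ_pred_eq_of_pos (lt_of_lt_of_le (by norm_num) hn2)
    calc n * (n - 1) + n = n * ((n - 1) + 1) := by ring
      _ = n * n := by rw [h1]
  have hfinal : n * (n - 1) + (n + 2) ≤ n * n :=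
    le_trans (Nat.add_le_add_right h2T (n + 2)) hcomb
  rw [← hnn] at hfinal
  have : n + 2 ≤ n := Nat.le_of_add_le_add_left (by
    calc n * (n - 1) + (n + 2) ≤ n * (n - 1) + n := hfinal)
  omega
end
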